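/- arXiv:2506.08689 — 5 statements merged into one kernel-verified Lean document; each statement's English description precedes it below -/
import Mathlib

section
/- Let X ⊆ ℝ^d be Borel, ρ ≥ 1, and let P, Q be Borel probability measures on X with finite ρ-th moments. For any measurable function f : X → Y ⊆ ℝ^q such that f#P and f#Q have finite ρ-th moments, the ρ-Wasserstein distance between the pushforward measures satisfies W_ρ(f#P, f#Q) = ( inf_{γ ∈ Γ(P,Q)} ∫_{X×X} ‖f(x) − f(y)‖^ρ dγ(x,y) )^{1/ρ}, where Γ(P,Q) is the set of couplings of P and Q. -/
open MeasureTheory ENNReal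

noncomputable section

/-- `ℝ^d` with the Euclidean norm. -/
abbrev Euc (d : ℕ) : Type := EuclideanSpace ℝ (Fin d)

/-- The set of couplings `Γ(μ, ν)` of two measures: probability measures on the product
whose first marginal is `μ` and second marginal is `ν`. -/
def Couplings {β : Type*} [MeasurableSpace β] (μ ν : Measure β) :
    Set (Measure (β × β)) :=
  {γ | IsProbabilityMeasure γ ∧ γ.map Prod.fst = μ ∧ γ.map Prod.snd = ν}

/-- The ρ-Wasserstein distance
`W_ρ(μ, ν) = (inf_{γ ∈ Γ(μ,ν)} ∫ ‖x - y‖^ρ dγ(x,y))^{1/ρ}`. -/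
noncomputable def Wass {β : Type*} [MeasurableSpace β] [NormedAddCommGroup β]
    (ρ : ℝ) (μ ν : Measure β) : ℝ :=
  ((⨅ γ ∈ Couplings μ ν, ∫⁻ p, ENNReal.ofReal (‖p.1 - p.2‖ ^ ρ) ∂γ).toReal) ^ (1/ρ)

/-- `μ` has finite ρ-th moment: `∫ ‖x‖^ρ dμ(x) < ∞`. -/
def HasFiniteMoment {β : Type*} [MeasurableSpace β] [NormedAddCommGroup β]
    (ρ : ℝ) (μ : Measure β) : Prop :=
  ∫⁻ x, ENNReal.ofReal (‖x‖ ^ ρ) ∂μ < ⊤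

/-- A measurable partition of a set `X` into `N` regions. -/
def IsMeasPartition {β : Type*} [MeasurableSpace β] {N : ℕ}
    (R : Fin N → Set β) (X : Set β) : Prop :=
  (∀ i, MeasurableSet (R i)) ∧ (⋃ i, R i) = X ∧ ∀ i j, i ≠ j → R i ∩ R j = ∅

/-- The quantization operator `Δ_{R,C}(x) = Σ_i c_i 1_{R_i}(x)`. -/
noncomputable def quantMap {β : Type*} [AddCommMonoid β] {N : ℕ}
    (R : Fin N → Set β) (c : Fin N → β) (x : β) : β :=
  ∑ i, (R i).indicator (fun _ => c i) x


open ProbabilityTheory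
lemma condKernel_support {d q : ℕ} (P : Measure (Euc d)) [IsProbabilityMeasure P]
    (f : Euc d → Euc q) (hf : Measurable f) :
    ∀ᵐ y ∂(P.map f), ∀ᵐ x ∂((P.map (fun x => (f x, x))).condKernel y), f x = y := by
  set J : Measure (Euc q × Euc d) := P.map (fun x => (f x, x)) with hJ
  have hm : Measurable (fun x : Euc d => (f x, x)) := hf.prodMk measurable_id
  haveI : IsProbabilityMeasure J := Measure.isProbabilityMeasure_map hm.aemeasurable
  have hfst : J.fst = P.map f := by
    rw [Measure.fst, hJ, Measure.map_map measurable_fst hm]; rfl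
  set S : Set (Euc q × Euc d) := {p | f p.2 = p.1} with hS
  have hSm : MeasurableSet S := measurableSet_eq_fun (hf.comp measurable_snd) measurable_fst
  have hJS : J Sᶜ = 0 := by
    rw [hJ, Measure.map_apply hm hSm.compl]
    have hpre : (fun x : Euc d => (f x, x)) ⁻¹' Sᶜ = ∅ := by ext x; simp [hS]
    rw [hpre]; simp
  have hcomp : (J.fst ⊗ₘ J.condKernel) Sᶜ = 0 := by
    rw [J.disintegrate J.condKernel]; exact hJS
  rw [Measure.compProd_apply hSm.compl] at hcomp
  have h0 : ∀ᵐ y ∂J.fst, J.condKernel y (Prod.mk y ⁻¹' Sᶜ) = 0 :=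
    (lintegral_eq_zero_iff (Kernel.measurable_kernel_prodMk_left hSm.compl)).mp hcomp
  rw [hfst] at h0
  filter_upwards [h0] with y hy
  rw [ae_iff]
  exact hy

lemma joint_marginal {d q : ℕ} (P : Measure (Euc d)) [IsProbabilityMeasure P]
    (f : Euc d → Euc q) (hf : Measurable f) {s : Set (Euc d)} (hs : MeasurableSet s) :
    ∫⁻ y, (P.map (fun x => (f x, x))).condKernel y s ∂(P.map f) = P s := by
  set J : Measure (Euc q × Euc d) := P.map (fun x => (f x, x)) with hJ
  have hm : Measurable (fun x : Euc d => (f x, x)) := hf.prodMk measurable_id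
  haveI : IsProbabilityMeasure J := Measure.isProbabilityMeasure_map hm.aemeasurable
  have hfst : J.fst = P.map f := by
    rw [Measure.fst, hJ, Measure.map_map measurable_fst hm]; rfl
  have h1 : (J.fst ⊗ₘ J.condKernel) (Set.univ ×ˢ s) = J (Set.univ ×ˢ s) := by
    rw [J.disintegrate J.condKernel]
  rw [Measure.compProd_apply (MeasurableSet.univ.prod hs), hfst] at h1
  have h2 : ∀ y : Euc q, Prod.mk y ⁻¹' (Set.univ ×ˢ s) = s := by intro y; ext x; simp
  simp_rw [h2] at h1
  rw [h1, hJ, Measure.map_apply hm (MeasurableSet.univ.prod hs)]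
  congr 1; ext x; simp

lemma lift_coupling {d q : ℕ} (ρ : ℝ) (P Q : Measure (Euc d))
    [IsProbabilityMeasure P] [IsProbabilityMeasure Q]
    (f : Euc d → Euc q) (hf : Measurable f)
    (η : Measure (Euc q × Euc q)) (hη : η ∈ Couplings (P.map f) (Q.map f)) :
    ∃ γ ∈ Couplings P Q,
      ∫⁻ p, ENNReal.ofReal (‖f p.1 - f p.2‖ ^ ρ) ∂γ
        = ∫⁻ p, ENNReal.ofReal (‖p.1 - p.2‖ ^ ρ) ∂η := by
  obtain ⟨hηP, hη1, hη2⟩ := hη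
  set κP := (P.map (fun x => (f x, x))).condKernel with hκP
  set κQ := (Q.map (fun x => (f x, x))).condKernel with hκQ
  set K : Kernel (Euc q × Euc q) (Euc d × Euc d) :=
    (κP.comap Prod.fst measurable_fst) ×ₖ (κQ.comap Prod.snd measurable_snd) with hKdef
  have hK : ∀ p : Euc q × Euc q, K p = (κP p.1).prod (κQ p.2) := by
    intro p; rw [hKdef, Kernel.prod_apply, Kernel.comap_apply, Kernel.comap_apply]
  refine ⟨η.bind K, ⟨?_, ?_, ?_⟩, ?_⟩
  · constructor
    rw [Measure.bind_apply MeasurableSet.univ K.measurable.aemeasurable]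
    simp [measure_univ]
  · ext s hs
    rw [Measure.map_apply measurable_fst hs,
      Measure.bind_apply (measurable_fst hs) K.measurable.aemeasurable]
    have hKs : ∀ p : Euc q × Euc q, K p (Prod.fst ⁻¹' s) = κP p.1 s := by
      intro p
      rw [hK, ← Set.prod_univ, Measure.prod_prod, measure_univ, mul_one]
    simp_rw [hKs]
    rw [← lintegral_map (κP.measurable_coe hs) measurable_fst, hη1,
      joint_marginal P f hf hs]
  · ext s hs
    rw [Measure.map_apply measurable_snd hs,
      Measure.bind_apply (measurable_snd hs) K.measurable.aemeasurable]
    have hKs : ∀ p : Euc q × Euc q, K p (Prod.snd ⁻¹' s) = κQ p.2 s := by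
      intro p
      rw [hK, ← Set.univ_prod, Measure.prod_prod, measure_univ, one_mul]
    simp_rw [hKs]
    rw [← lintegral_map (κQ.measurable_coe hs) measurable_snd, hη2,
      joint_marginal Q f hf hs]
  · have gmeas : Measurable (fun z : Euc d × Euc d => ENNReal.ofReal (‖f z.1 - f z.2‖ ^ ρ)) := by
      fun_prop
    rw [Measure.lintegral_bind K.measurable.aemeasurable gmeas.aemeasurable]
    have haeP : ∀ᵐ p ∂η, ∀ᵐ x ∂κP p.1, f x = p.1 := by
      have h := condKernel_support P f hf
      rw [← hη1] at h
      exact ae_of_ae_map measurable_fst.aemeasurable h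
    have haeQ : ∀ᵐ p ∂η, ∀ᵐ x ∂κQ p.2, f x = p.2 := by
      have h := condKernel_support Q f hf
      rw [← hη2] at h
      exact ae_of_ae_map measurable_snd.aemeasurable h
    apply lintegral_congr_ae
    filter_upwards [haeP, haeQ] with p hp hq
    rw [hK, lintegral_prod _ gmeas.aemeasurable]
    calc ∫⁻ x1, ∫⁻ x2, ENNReal.ofReal (‖f x1 - f x2‖ ^ ρ) ∂(κQ p.2) ∂(κP p.1)
        = ∫⁻ x1, ENNReal.ofReal (‖f x1 - p.2‖ ^ ρ) ∂(κP p.1) := by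
          refine lintegral_congr fun x1 => ?_
          rw [lintegral_congr_ae (hq.mono fun x2 h => by rw [h]), lintegral_const,
            measure_univ, mul_one]
      _ = ENNReal.ofReal (‖p.1 - p.2‖ ^ ρ) := by
          rw [lintegral_congr_ae (hp.mono fun x1 h => by rw [h]), lintegral_const,
            measure_univ, mul_one]

/-- For Borel probability measures `P`, `Q` on `X ⊆ ℝ^d` with finite ρ-th
moments and a measurable `f : X → Y ⊆ ℝ^q` whose pushforwards have finite ρ-th moments,
`W_ρ(f#P, f#Q) = (inf_{γ ∈ Γ(P,Q)} ∫ ‖f(x) - f(y)‖^ρ dγ(x,y))^{1/ρ}`. -/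
theorem stmt0 {d q : ℕ} (ρ : ℝ) (hρ : 1 ≤ ρ)
    (X : Set (Euc d)) (hXm : MeasurableSet X) (Y : Set (Euc q))
    (P Q : Measure (Euc d))
    (hP : IsProbabilityMeasure P) (hQ : IsProbabilityMeasure Q)
    (hPX : P X = 1) (hQX : Q X = 1)
    (hPm : HasFiniteMoment ρ P) (hQm : HasFiniteMoment ρ Q)
    (f : Euc d → Euc q) (hf : Measurable f) (hfXY : Set.MapsTo f X Y)
    (hfPm : HasFiniteMoment ρ (P.map f)) (hfQm : HasFiniteMoment ρ (Q.map f)) :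
    Wass ρ (P.map f) (Q.map f) =
      ((⨅ γ ∈ Couplings P Q,
          ∫⁻ p, ENNReal.ofReal (‖f p.1 - f p.2‖ ^ ρ) ∂γ).toReal) ^ (1/ρ) := by
  haveI := hP; haveI := hQ
  have gmeas : Measurable (fun p : Euc q × Euc q => ENNReal.ofReal (‖p.1 - p.2‖ ^ ρ)) := by
    fun_prop
  have key : (⨅ γ ∈ Couplings (P.map f) (Q.map f),
        ∫⁻ p, ENNReal.ofReal (‖p.1 - p.2‖ ^ ρ) ∂γ)
      = ⨅ γ ∈ Couplings P Q, ∫⁻ p, ENNReal.ofReal (‖f p.1 - f p.2‖ ^ ρ) ∂γ := by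
    apply le_antisymm
    · refine le_iInf₂ fun γ hγ => ?_
      obtain ⟨hγP, hγ1, hγ2⟩ := hγ
      haveI := hγP
      have hmem : γ.map (Prod.map f f) ∈ Couplings (P.map f) (Q.map f) := by
        refine ⟨Measure.isProbabilityMeasure_map (hf.prodMap hf).aemeasurable, ?_, ?_⟩
        · rw [Measure.map_map measurable_fst (hf.prodMap hf)]
          have : Prod.fst ∘ Prod.map f f = f ∘ (Prod.fst : Euc d × Euc d → Euc d) := rfl
          rw [this, ← Measure.map_map hf measurable_fst, hγ1]
        · rw [Measure.map_map measurable_snd (hf.prodMap hf)]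
          have : Prod.snd ∘ Prod.map f f = f ∘ (Prod.snd : Euc d × Euc d → Euc d) := rfl
          rw [this, ← Measure.map_map hf measurable_snd, hγ2]
      refine iInf₂_le_of_le _ hmem (le_of_eq ?_)
      rw [lintegral_map gmeas (hf.prodMap hf)]
      rfl
    · refine le_iInf₂ fun η hη => ?_
      obtain ⟨γ, hγ, heq⟩ := lift_coupling ρ P Q f hf η hη
      exact heq ▸ iInf₂_le γ hγ
  unfold Wass
  rw [key]
end
end

section
/- Let X ⊆ ℝ^d, ρ ≥ 1, P a Borel probability measure on X with finite ρ-th moment, R = {R_1,…,R_N} a measurable partition of X, and C = {c_1,…,c_N} ⊂ X a set of locations. Let f : X → Y ⊆ ℝ^q be measurable, and for each k let π_k := P(R_k) and let α_k, β_k ≥ 0 satisfy ‖f(x) − f(c_k)‖^ρ ≤ α_k ‖x − c_k‖^ρ + β_k for all x ∈ X. Define θ_d := ( Σ_{k=1}^N ∫_{R_k} ‖x − c_k‖^ρ dP(x) )^{1/ρ} and α_max := max_{k} α_k. Then for any θ ≥ 0, sup_{Q ∈ B_θ(P)} W_ρ(f#Q, f#Δ_{R,C}#P) ≤ ( α_max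 (θ + θ_d)^ρ + Σ_{k=1}^N π_k β_k )^{1/ρ}. -/
open MeasureTheory ENNReal

noncomputable section

private lemma sum_ind_eq {β' γ' : Type*} [AddCommMonoid γ'] {N : ℕ} {R : Fin N → Set β'}
    (hdisj : ∀ i j, i ≠ j → R i ∩ R j = ∅) {k : Fin N} {y : β'} (hy : y ∈ R k)
    (t : Fin N → β' → γ') : ∑ i, (R i).indicator (t i) y = t k y := by
  rw [Finset.sum_eq_single k]
  · exact Set.indicator_of_mem hy _
  · intro i _ hik
    apply Set.indicator_of_notMem
    intro hyi
    exact (Set.eq_empty_iff_forall_notMem.1 (hdisj i k hik) y) ⟨hyi, hy⟩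
  · intro h; exact absurd (Finset.mem_univ k) h

private lemma ennreal_add_rpow_le (a b : ℝ≥0∞) {ρ : ℝ} (hρ : 0 ≤ ρ) :
    (a + b) ^ ρ ≤ 2 ^ ρ * (a ^ ρ + b ^ ρ) := by
  have h1 : a + b ≤ 2 * (a ⊔ b) := by
    rw [two_mul]; exact add_le_add le_sup_left le_sup_right
  calc (a + b) ^ ρ ≤ (2 * (a ⊔ b)) ^ ρ := ENNReal.rpow_le_rpow h1 hρ
    _ = 2 ^ ρ * (a ⊔ b) ^ ρ := ENNReal.mul_rpow_of_nonneg _ _ hρ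
    _ ≤ 2 ^ ρ * (a ^ ρ + b ^ ρ) := by
        gcongr
        rcases le_total a b with h | h
        · rw [sup_eq_right.2 h]; exact le_add_self
        · rw [sup_eq_left.2 h]; exact le_self_add

private lemma moment_sub_lt_top {E : Type*} [MeasurableSpace E] [NormedAddCommGroup E]
    {ρ : ℝ} (hρ : 0 ≤ ρ) {μ : Measure E} [IsProbabilityMeasure μ]
    (hm : ∫⁻ x, ENNReal.ofReal (‖x‖ ^ ρ) ∂μ < ⊤) (v : E) :
    ∫⁻ x, ENNReal.ofReal (‖x - v‖ ^ ρ) ∂μ < ⊤ := by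
  have hb : ∀ x : E, ENNReal.ofReal (‖x - v‖ ^ ρ) ≤
      2 ^ ρ * (ENNReal.ofReal (‖x‖ ^ ρ) + ENNReal.ofReal (‖v‖ ^ ρ)) := by
    intro x
    rw [← ENNReal.ofReal_rpow_of_nonneg (norm_nonneg _) hρ,
        ← ENNReal.ofReal_rpow_of_nonneg (norm_nonneg x) hρ,
        ← ENNReal.ofReal_rpow_of_nonneg (norm_nonneg v) hρ]
    refine le_trans (ENNReal.rpow_le_rpow ?_ hρ) (ennreal_add_rpow_le _ _ hρ)
    rw [← ENNReal.ofReal_add (norm_nonneg _) (norm_nonneg _)]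
    exact ENNReal.ofReal_le_ofReal (norm_sub_le x v)
  have h2top : (2 : ℝ≥0∞) ^ ρ ≠ ⊤ := ENNReal.rpow_ne_top_of_nonneg hρ (by simp)
  calc ∫⁻ x, ENNReal.ofReal (‖x - v‖ ^ ρ) ∂μ
      ≤ ∫⁻ x, 2 ^ ρ * (ENNReal.ofReal (‖x‖ ^ ρ) + ENNReal.ofReal (‖v‖ ^ ρ)) ∂μ :=
        lintegral_mono hb
    _ = 2 ^ ρ * ((∫⁻ x, ENNReal.ofReal (‖x‖ ^ ρ) ∂μ) + ENNReal.ofReal (‖v‖ ^ ρ)) := by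
        rw [lintegral_const_mul' _ _ h2top, lintegral_add_right _ measurable_const,
          lintegral_const, measure_univ, mul_one]
    _ < ⊤ := by
        refine ENNReal.mul_lt_top h2top.lt_top (ENNReal.add_lt_top.2 ⟨hm, ENNReal.ofReal_lt_top⟩)

/-- Theorem: uncertainty propagation of ambiguity sets. With
`π_k = P(R_k)`, linearization coefficients `α_k, β_k ≥ 0` such that
`‖f(x) - f(c_k)‖^ρ ≤ α_k ‖x - c_k‖^ρ + β_k` for all `x ∈ X`,
`θ_d = (Σ_k ∫_{R_k} ‖x - c_k‖^ρ dP)^{1/ρ}` and `α_max = max_k α_k`, every `Q` in the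
Wasserstein ball `B_θ(P)` satisfies
`W_ρ(f#Q, f#Δ_{R,C}#P) ≤ (α_max (θ + θ_d)^ρ + Σ_k π_k β_k)^{1/ρ}`. -/
theorem stmt3 {d q N : ℕ} (ρ : ℝ) (hρ : 1 ≤ ρ) (θ : ℝ) (hθ : 0 ≤ θ)
    (X : Set (Euc d)) (hXm : MeasurableSet X) (Y : Set (Euc q))
    (P : Measure (Euc d)) (hP : IsProbabilityMeasure P) (hPX : P X = 1)
    (hPm : HasFiniteMoment ρ P)
    (R : Fin N → Set (Euc d)) (hR : IsMeasPartition R X)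
    (c : Fin N → Euc d) (hc : ∀ k, c k ∈ X)
    (f : Euc d → Euc q) (hf : Measurable f) (hfXY : Set.MapsTo f X Y)
    (hfm : HasFiniteMoment ρ ((P.map (quantMap R c)).map f))
    (α β : Fin N → ℝ) (hα : ∀ k, 0 ≤ α k) (hβ : ∀ k, 0 ≤ β k)
    (hlin : ∀ k, ∀ x ∈ X, ‖f x - f (c k)‖ ^ ρ ≤ α k * ‖x - c k‖ ^ ρ + β k)
    (αmax : ℝ) (hαmax : IsGreatest (Set.range α) αmax)
    (θd : ℝ) (hθd : θd = (∑ k, ∫ x in R k, ‖x - c k‖ ^ ρ ∂P) ^ (1/ρ)) :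
    ∀ Q : Measure (Euc d), IsProbabilityMeasure Q → Q X = 1 → HasFiniteMoment ρ Q →
      Wass ρ P Q ≤ θ → HasFiniteMoment ρ (Q.map f) →
      Wass ρ (Q.map f) ((P.map (quantMap R c)).map f) ≤
        (αmax * (θ + θd) ^ ρ + ∑ k, (P (R k)).toReal * β k) ^ (1/ρ) := by
  
  intro Q hQ hQX hQm hWPQ hQfm
  haveI := hP; haveI := hQ
  have hρ0 : (0:ℝ) < ρ := lt_of_lt_of_le one_pos hρ
  have hρ0' : (0:ℝ) ≤ ρ := le_of_lt hρ0
  have hρne : ρ ≠ 0 := ne_of_gt hρ0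
  have hinvρ : (0:ℝ) < 1/ρ := by positivity
  have hΔ : Measurable (quantMap R c) := by
    apply Finset.measurable_sum
    intro i _
    exact measurable_const.indicator (hR.1 i)
  have hαmax0 : 0 ≤ αmax := by
    obtain ⟨k0, hk0⟩ := hαmax.1
    exact hk0 ▸ hα k0
  have hB0 : 0 ≤ ∑ k, (P (R k)).toReal * β k :=
    Finset.sum_nonneg fun k _ => mul_nonneg ENNReal.toReal_nonneg (hβ k)
  have hmcost : Measurable (fun p : Euc d × Euc d => ENNReal.ofReal (‖p.1 - p.2‖ ^ ρ)) := by
    fun_prop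
  have hmcostq : Measurable (fun p : Euc q × Euc q => ENNReal.ofReal (‖p.1 - p.2‖ ^ ρ)) := by
    fun_prop
  -- a.e. membership in X
  have hPXc : P Xᶜ = 0 := (prob_compl_eq_zero_iff hXm).2 hPX
  have hQXc : Q Xᶜ = 0 := (prob_compl_eq_zero_iff hXm).2 hQX
  have haePX : ∀ᵐ y ∂P, y ∈ X := by
    rw [ae_iff]; exact hPXc
  -- disjointness of product sets
  have hdisj' : ∀ i j : Fin N, i ≠ j →
      ((R i) ×ˢ (Set.univ : Set (Euc d))) ∩ ((R j) ×ˢ (Set.univ : Set (Euc d))) = ∅ := by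
    intro i j hij
    rw [Set.prod_inter_prod, hR.2.2 i j hij, Set.empty_prod]
  have hmemR : ∀ y : Euc d, y ∈ X → ∃ k, y ∈ R k := by
    intro y hy
    rw [← hR.2.1] at hy
    exact Set.mem_iUnion.1 hy
  -- the quantity S
  set S : ℝ≥0∞ := ∑ k, ∫⁻ x in R k, ENNReal.ofReal (‖x - c k‖ ^ ρ) ∂P with hSdef
  have hSk_lt : ∀ k, ∫⁻ x in R k, ENNReal.ofReal (‖x - c k‖ ^ ρ) ∂P < ⊤ := by
    intro k
    exact lt_of_le_of_lt (setLIntegral_le_lintegral _ _) (moment_sub_lt_top hρ0' hPm (c k))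
  have hSlt : S < ⊤ := ENNReal.sum_lt_top.2 (fun k _ => hSk_lt k)
  -- θd facts
  have hθd_eq : θd = S.toReal ^ (1/ρ) := by
    rw [hθd]
    congr 1
    rw [hSdef, ENNReal.toReal_sum (fun k _ => (hSk_lt k).ne)]
    refine Finset.sum_congr rfl (fun k _ => ?_)
    rw [integral_eq_lintegral_of_nonneg_ae]
    · exact Filter.Eventually.of_forall (fun x => Real.rpow_nonneg (norm_nonneg _) ρ)
    · have : Measurable (fun x : Euc d => ‖x - c k‖ ^ ρ) := by fun_prop
      exact this.aestronglyMeasurable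
  have hθd0 : 0 ≤ θd := hθd_eq ▸ Real.rpow_nonneg ENNReal.toReal_nonneg _
  have hofθd : ENNReal.ofReal θd = S ^ (1/ρ) := by
    rw [hθd_eq, ← ENNReal.ofReal_rpow_of_nonneg ENNReal.toReal_nonneg (le_of_lt hinvρ),
      ENNReal.ofReal_toReal hSlt.ne]
  -- the infimum over couplings of P and Q
  set I0 : ℝ≥0∞ := ⨅ γ ∈ Couplings P Q, ∫⁻ p, ENNReal.ofReal (‖p.1 - p.2‖ ^ ρ) ∂γ with hI0def
  have hprodC : (P.prod Q) ∈ Couplings P Q := by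
    refine ⟨inferInstance, ?_, ?_⟩
    · exact Measure.fst_prod
    · exact Measure.snd_prod
  have hprodcost : (∫⁻ p, ENNReal.ofReal (‖p.1 - p.2‖ ^ ρ) ∂(P.prod Q)) < ⊤ := by
    have hb : ∀ p : Euc d × Euc d, ENNReal.ofReal (‖p.1 - p.2‖ ^ ρ) ≤
        2 ^ ρ * (ENNReal.ofReal (‖p.1‖ ^ ρ) + ENNReal.ofReal (‖p.2‖ ^ ρ)) := by
      intro p
      rw [← ENNReal.ofReal_rpow_of_nonneg (norm_nonneg _) hρ0',
          ← ENNReal.ofReal_rpow_of_nonneg (norm_nonneg p.1) hρ0',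
          ← ENNReal.ofReal_rpow_of_nonneg (norm_nonneg p.2) hρ0']
      refine le_trans (ENNReal.rpow_le_rpow ?_ hρ0') (ennreal_add_rpow_le _ _ hρ0')
      rw [← ENNReal.ofReal_add (norm_nonneg _) (norm_nonneg _)]
      exact ENNReal.ofReal_le_ofReal (norm_sub_le p.1 p.2)
    have h2top : (2 : ℝ≥0∞) ^ ρ ≠ ⊤ := ENNReal.rpow_ne_top_of_nonneg hρ0' (by simp)
    have hm1 : Measurable (fun p : Euc d × Euc d => ENNReal.ofReal (‖p.1‖ ^ ρ)) := by fun_prop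
    have hm2 : Measurable (fun p : Euc d × Euc d => ENNReal.ofReal (‖p.2‖ ^ ρ)) := by fun_prop
    calc ∫⁻ p, ENNReal.ofReal (‖p.1 - p.2‖ ^ ρ) ∂(P.prod Q)
        ≤ ∫⁻ p, 2 ^ ρ * (ENNReal.ofReal (‖p.1‖ ^ ρ) + ENNReal.ofReal (‖p.2‖ ^ ρ)) ∂(P.prod Q) :=
          lintegral_mono hb
      _ = 2 ^ ρ * ((∫⁻ p, ENNReal.ofReal (‖p.1‖ ^ ρ) ∂(P.prod Q)) +
            ∫⁻ p, ENNReal.ofReal (‖p.2‖ ^ ρ) ∂(P.prod Q)) := by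
          rw [lintegral_const_mul' _ _ h2top, lintegral_add_right _ hm2]
      _ < ⊤ := by
          have e1 : ∫⁻ p, ENNReal.ofReal (‖p.1‖ ^ ρ) ∂(P.prod Q)
              = ∫⁻ x, ENNReal.ofReal (‖x‖ ^ ρ) ∂P := by
            have : ∫⁻ x, ENNReal.ofReal (‖x‖ ^ ρ) ∂((P.prod Q).map Prod.fst)
                = ∫⁻ p, ENNReal.ofReal (‖p.1‖ ^ ρ) ∂(P.prod Q) :=
              lintegral_map (by fun_prop) measurable_fst
            rw [← this]
            congr 1
            exact Measure.fst_prod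
          have e2 : ∫⁻ p, ENNReal.ofReal (‖p.2‖ ^ ρ) ∂(P.prod Q)
              = ∫⁻ x, ENNReal.ofReal (‖x‖ ^ ρ) ∂Q := by
            have : ∫⁻ x, ENNReal.ofReal (‖x‖ ^ ρ) ∂((P.prod Q).map Prod.snd)
                = ∫⁻ p, ENNReal.ofReal (‖p.2‖ ^ ρ) ∂(P.prod Q) :=
              lintegral_map (by fun_prop) measurable_snd
            rw [← this]
            congr 1
            exact Measure.snd_prod
          rw [e1, e2]
          exact ENNReal.mul_lt_top h2top.lt_top (ENNReal.add_lt_top.2 ⟨hPm, hQm⟩)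
  have hI0top : I0 ≠ ⊤ := by
    refine ne_top_of_le_ne_top hprodcost.ne ?_
    exact iInf₂_le _ hprodC
  have hI0 : I0 ≤ ENNReal.ofReal (θ ^ ρ) := by
    rw [ENNReal.le_ofReal_iff_toReal_le hI0top (Real.rpow_nonneg hθ ρ)]
    have h := hWPQ
    unfold Wass at h
    rw [← hI0def] at h
    calc I0.toReal = (I0.toReal ^ (1/ρ)) ^ ρ := by
          rw [← Real.rpow_mul ENNReal.toReal_nonneg, one_div_mul_cancel hρne, Real.rpow_one]
      _ ≤ θ ^ ρ := Real.rpow_le_rpow (Real.rpow_nonneg ENNReal.toReal_nonneg _) h hρ0'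
  -- the key per-ε bound
  have key : ∀ ε : ℝ, 0 < ε →
      Wass ρ (Q.map f) ((P.map (quantMap R c)).map f) ≤
        (αmax * ((θ ^ ρ + ε) ^ (1/ρ) + θd) ^ ρ + ∑ k, (P (R k)).toReal * β k) ^ (1/ρ) := by
    intro ε hε
    have hbase0 : (0:ℝ) ≤ θ ^ ρ + ε := by positivity
    have hsum0 : (0:ℝ) ≤ (θ ^ ρ + ε) ^ (1/ρ) + θd :=
      add_nonneg (Real.rpow_nonneg hbase0 _) hθd0
    have hbε0 : (0:ℝ) ≤ αmax * ((θ ^ ρ + ε) ^ (1/ρ) + θd) ^ ρ + ∑ k, (P (R k)).toReal * β k :=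
      add_nonneg (mul_nonneg hαmax0 (Real.rpow_nonneg hsum0 _)) hB0
    -- get a near-optimal coupling
    obtain ⟨γ, hγC, hγcost⟩ : ∃ γ ∈ Couplings P Q,
        (∫⁻ p, ENNReal.ofReal (‖p.1 - p.2‖ ^ ρ) ∂γ) < I0 + ENNReal.ofReal ε := by
      have hlt : I0 < I0 + ENNReal.ofReal ε :=
        ENNReal.lt_add_right hI0top (by simpa using ENNReal.ofReal_pos.2 hε)
      rw [hI0def] at hlt
      simpa only [iInf_lt_iff, exists_prop] using hlt
    obtain ⟨hγprob, hγ1, hγ2⟩ := hγC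
    haveI := hγprob
    have hγcost' : (∫⁻ p, ENNReal.ofReal (‖p.1 - p.2‖ ^ ρ) ∂γ) ≤ ENNReal.ofReal (θ ^ ρ + ε) := by
      rw [ENNReal.ofReal_add (Real.rpow_nonneg hθ ρ) (le_of_lt hε)]
      exact le_trans (le_of_lt hγcost) (add_le_add hI0 le_rfl)
    -- a.e. membership
    have haeγ : ∀ᵐ p ∂γ, p.1 ∈ X ∧ p.2 ∈ X := by
      have h1 : ∀ᵐ p ∂γ, p.1 ∈ X := by
        rw [ae_iff]
        have : γ (Prod.fst ⁻¹' Xᶜ) = 0 := by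
          rw [← Measure.map_apply measurable_fst hXm.compl, hγ1, hPXc]
        exact this
      have h2 : ∀ᵐ p ∂γ, p.2 ∈ X := by
        rw [ae_iff]
        have : γ (Prod.snd ⁻¹' Xᶜ) = 0 := by
          rw [← Measure.map_apply measurable_snd hXm.compl, hγ2, hQXc]
        exact this
      exact h1.and h2
    -- the pushforward coupling
    set gm : Euc d × Euc d → Euc q × Euc q :=
      fun p => (f p.2, f (quantMap R c p.1)) with hgmdef
    have hgmm : Measurable gm :=
      Measurable.prod (hf.comp measurable_snd) ((hf.comp hΔ).comp measurable_fst)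
    have hηC : γ.map gm ∈ Couplings (Q.map f) ((P.map (quantMap R c)).map f) := by
      refine ⟨Measure.isProbabilityMeasure_map hgmm.aemeasurable, ?_, ?_⟩
      · rw [Measure.map_map measurable_fst hgmm]
        have he : (Prod.fst ∘ gm) = f ∘ Prod.snd := rfl
        rw [he, ← Measure.map_map hf measurable_snd, hγ2]
      · rw [Measure.map_map measurable_snd hgmm]
        have he : (Prod.snd ∘ gm) = (f ∘ quantMap R c) ∘ Prod.fst := rfl
        rw [he, ← Measure.map_map (hf.comp hΔ) measurable_fst, hγ1,
          ← Measure.map_map hf hΔ]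
    -- cost of the pushforward coupling
    have hcη : (∫⁻ p, ENNReal.ofReal (‖p.1 - p.2‖ ^ ρ) ∂(γ.map gm))
        = ∫⁻ p, ENNReal.ofReal (‖f p.2 - f (quantMap R c p.1)‖ ^ ρ) ∂γ := by
      rw [lintegral_map hmcostq hgmm]
    -- the two auxiliary sums
    set J : Fin N → ℝ≥0∞ := fun i =>
      ∫⁻ p in (R i) ×ˢ (Set.univ : Set (Euc d)), ENNReal.ofReal (‖p.2 - c i‖ ^ ρ) ∂γ with hJdef
    have hγRi : ∀ i, γ ((R i) ×ˢ (Set.univ : Set (Euc d))) = P (R i) := by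
      intro i
      rw [Set.prod_univ, ← Measure.map_apply measurable_fst (hR.1 i), hγ1]
    -- step 1: pointwise bound by φ
    have hφm : ∀ i : Fin N, Measurable
        (((R i) ×ˢ (Set.univ : Set (Euc d))).indicator
          (fun q : Euc d × Euc d => ENNReal.ofReal (α i * ‖q.2 - c i‖ ^ ρ + β i))) := by
      intro i
      exact Measurable.indicator (by fun_prop) ((hR.1 i).prod MeasurableSet.univ)
    have h1 : ∀ᵐ p ∂γ, ENNReal.ofReal (‖f p.2 - f (quantMap R c p.1)‖ ^ ρ) ≤
        ∑ i, ((R i) ×ˢ (Set.univ : Set (Euc d))).indicator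
          (fun q : Euc d × Euc d => ENNReal.ofReal (α i * ‖q.2 - c i‖ ^ ρ + β i)) p := by
      filter_upwards [haeγ] with p hp
      obtain ⟨hp1, hp2⟩ := hp
      obtain ⟨k, hk⟩ := hmemR p.1 hp1
      have hΔp : quantMap R c p.1 = c k := sum_ind_eq hR.2.2 hk _
      have hk' : p ∈ (R k) ×ˢ (Set.univ : Set (Euc d)) := ⟨hk, trivial⟩
      rw [sum_ind_eq hdisj' hk' _, hΔp]
      exact ENNReal.ofReal_le_ofReal (hlin k p.2 hp2)
    -- step 2: integral of φ
    have h2 : (∫⁻ p, (∑ i, ((R i) ×ˢ (Set.univ : Set (Euc d))).indicator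
          (fun q : Euc d × Euc d => ENNReal.ofReal (α i * ‖q.2 - c i‖ ^ ρ + β i)) p) ∂γ)
        = ∑ i, (ENNReal.ofReal (α i) * J i + ENNReal.ofReal (β i) * P (R i)) := by
      rw [lintegral_finset_sum _ (fun i _ => hφm i)]
      refine Finset.sum_congr rfl (fun i _ => ?_)
      rw [lintegral_indicator ((hR.1 i).prod MeasurableSet.univ)]
      have hptw : ∀ q : Euc d × Euc d, ENNReal.ofReal (α i * ‖q.2 - c i‖ ^ ρ + β i)
          = ENNReal.ofReal (α i) * ENNReal.ofReal (‖q.2 - c i‖ ^ ρ) + ENNReal.ofReal (β i) := by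
        intro q
        rw [ENNReal.ofReal_add (mul_nonneg (hα i) (Real.rpow_nonneg (norm_nonneg _) ρ)) (hβ i),
          ENNReal.ofReal_mul (hα i)]
      rw [lintegral_congr hptw, lintegral_add_right _ measurable_const,
        lintegral_const_mul' _ _ ENNReal.ofReal_ne_top, setLIntegral_const, hγRi i, hJdef]
    -- step 3: bound the α part
    have h3 : ∑ i, ENNReal.ofReal (α i) * J i ≤ ENNReal.ofReal αmax * ∑ i, J i := by
      rw [Finset.mul_sum]
      refine Finset.sum_le_sum (fun i _ => ?_)
      exact mul_le_mul_left (ENNReal.ofReal_le_ofReal (hαmax.2 ⟨i, rfl⟩)) _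
    -- step 4: sum of J as one integral
    have h4 : ∑ i, J i = ∫⁻ p, (∑ i, ((R i) ×ˢ (Set.univ : Set (Euc d))).indicator
        (fun q : Euc d × Euc d => ENNReal.ofReal (‖q.2 - c i‖ ^ ρ)) p) ∂γ := by
      rw [lintegral_finset_sum _ (fun i _ =>
        Measurable.indicator (by fun_prop) ((hR.1 i).prod MeasurableSet.univ))]
      refine Finset.sum_congr rfl (fun i _ => ?_)
      rw [lintegral_indicator ((hR.1 i).prod MeasurableSet.univ), hJdef]
    -- step 5: a.e. pointwise triangle bound
    have h5 : ∀ᵐ p ∂γ, (∑ i, ((R i) ×ˢ (Set.univ : Set (Euc d))).indicator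
        (fun q : Euc d × Euc d => ENNReal.ofReal (‖q.2 - c i‖ ^ ρ)) p) ≤
        ((fun p : Euc d × Euc d => ENNReal.ofReal ‖p.2 - p.1‖) p +
         (fun p : Euc d × Euc d => ENNReal.ofReal ‖p.1 - quantMap R c p.1‖) p) ^ ρ := by
      filter_upwards [haeγ] with p hp
      obtain ⟨hp1, _⟩ := hp
      obtain ⟨k, hk⟩ := hmemR p.1 hp1
      have hΔp : quantMap R c p.1 = c k := sum_ind_eq hR.2.2 hk _
      have hk' : p ∈ (R k) ×ˢ (Set.univ : Set (Euc d)) := ⟨hk, trivial⟩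
      rw [sum_ind_eq hdisj' hk' _]
      rw [← ENNReal.ofReal_rpow_of_nonneg (norm_nonneg _) hρ0']
      refine ENNReal.rpow_le_rpow ?_ hρ0'
      rw [← ENNReal.ofReal_add (norm_nonneg _) (norm_nonneg _)]
      refine ENNReal.ofReal_le_ofReal ?_
      rw [hΔp]
      exact norm_sub_le_norm_sub_add_norm_sub p.2 p.1 (c k)
    -- step 6: Minkowski
    have hm1 : Measurable (fun p : Euc d × Euc d => ENNReal.ofReal ‖p.2 - p.1‖) := by fun_prop
    have hm2 : Measurable (fun p : Euc d × Euc d =>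
        ENNReal.ofReal ‖p.1 - quantMap R c p.1‖) := by
      have : Measurable (fun y : Euc d => ENNReal.ofReal ‖y - quantMap R c y‖) := by fun_prop
      exact this.comp measurable_fst
    have h6 : (∫⁻ p, ((fun p : Euc d × Euc d => ENNReal.ofReal ‖p.2 - p.1‖) p +
          (fun p : Euc d × Euc d => ENNReal.ofReal ‖p.1 - quantMap R c p.1‖) p) ^ ρ ∂γ) ≤
        ((∫⁻ p, ((fun p : Euc d × Euc d => ENNReal.ofReal ‖p.2 - p.1‖) p) ^ ρ ∂γ) ^ (1/ρ) +
         (∫⁻ p, ((fun p : Euc d × Euc d =>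
            ENNReal.ofReal ‖p.1 - quantMap R c p.1‖) p) ^ ρ ∂γ) ^ (1/ρ)) ^ ρ := by
      have hmink := ENNReal.lintegral_Lp_add_le (μ := γ)
        hm1.aemeasurable hm2.aemeasurable hρ
      calc (∫⁻ p, ((fun p : Euc d × Euc d => ENNReal.ofReal ‖p.2 - p.1‖) p +
              (fun p : Euc d × Euc d => ENNReal.ofReal ‖p.1 - quantMap R c p.1‖) p) ^ ρ ∂γ)
          = ((∫⁻ p, ((fun p : Euc d × Euc d => ENNReal.ofReal ‖p.2 - p.1‖) p +
              (fun p : Euc d × Euc d =>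
                ENNReal.ofReal ‖p.1 - quantMap R c p.1‖) p) ^ ρ ∂γ) ^ (1/ρ)) ^ ρ := by
            rw [← ENNReal.rpow_mul, one_div_mul_cancel hρne, ENNReal.rpow_one]
        _ ≤ _ := ENNReal.rpow_le_rpow hmink hρ0'
    -- step 7: first Minkowski term is the coupling cost
    have h7 : (∫⁻ p, ((fun p : Euc d × Euc d => ENNReal.ofReal ‖p.2 - p.1‖) p) ^ ρ ∂γ)
        = ∫⁻ p, ENNReal.ofReal (‖p.1 - p.2‖ ^ ρ) ∂γ := by
      refine lintegral_congr (fun p => ?_)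
      rw [ENNReal.ofReal_rpow_of_nonneg (norm_nonneg _) hρ0', norm_sub_rev]
    -- step 8: second Minkowski term is S
    have h8 : (∫⁻ p, ((fun p : Euc d × Euc d =>
        ENNReal.ofReal ‖p.1 - quantMap R c p.1‖) p) ^ ρ ∂γ) = S := by
      have he0 : (∫⁻ p, ((fun p : Euc d × Euc d =>
          ENNReal.ofReal ‖p.1 - quantMap R c p.1‖) p) ^ ρ ∂γ)
          = ∫⁻ p, ENNReal.ofReal (‖p.1 - quantMap R c p.1‖ ^ ρ) ∂γ := by
        refine lintegral_congr (fun p => ?_)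
        rw [ENNReal.ofReal_rpow_of_nonneg (norm_nonneg _) hρ0']
      rw [he0]
      have hgy : Measurable (fun y : Euc d => ENNReal.ofReal (‖y - quantMap R c y‖ ^ ρ)) := by
        fun_prop
      have he1 : (∫⁻ p, ENNReal.ofReal (‖p.1 - quantMap R c p.1‖ ^ ρ) ∂γ)
          = ∫⁻ y, ENNReal.ofReal (‖y - quantMap R c y‖ ^ ρ) ∂P := by
        rw [← hγ1, lintegral_map hgy measurable_fst]
      rw [he1]
      have he2 : (∫⁻ y, ENNReal.ofReal (‖y - quantMap R c y‖ ^ ρ) ∂P)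
          = ∫⁻ y, (∑ i, (R i).indicator
              (fun z : Euc d => ENNReal.ofReal (‖z - c i‖ ^ ρ)) y) ∂P := by
        refine lintegral_congr_ae ?_
        filter_upwards [haePX] with y hy
        obtain ⟨k, hk⟩ := hmemR y hy
        have hΔy : quantMap R c y = c k := sum_ind_eq hR.2.2 hk _
        rw [sum_ind_eq hR.2.2 hk _, hΔy]
      rw [he2, lintegral_finset_sum _ (fun i _ =>
        Measurable.indicator (by fun_prop) (hR.1 i)), hSdef]
      refine Finset.sum_congr rfl (fun i _ => ?_)
      rw [lintegral_indicator (hR.1 i)]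
    -- assemble the cost bound
    have hterm1 : (∫⁻ p, ENNReal.ofReal (‖p.1 - p.2‖ ^ ρ) ∂γ) ^ (1/ρ)
        ≤ ENNReal.ofReal ((θ ^ ρ + ε) ^ (1/ρ)) := by
      rw [← ENNReal.ofReal_rpow_of_nonneg hbase0 (le_of_lt hinvρ)]
      exact ENNReal.rpow_le_rpow hγcost' (le_of_lt hinvρ)
    have hsumJ : ∑ i, J i ≤ ENNReal.ofReal (((θ ^ ρ + ε) ^ (1/ρ) + θd) ^ ρ) := by
      rw [h4]
      refine le_trans (lintegral_mono_ae h5) (le_trans h6 ?_)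
      rw [h7, h8, ← hofθd, ← ENNReal.ofReal_rpow_of_nonneg hsum0 hρ0']
      refine ENNReal.rpow_le_rpow ?_ hρ0'
      rw [ENNReal.ofReal_add (Real.rpow_nonneg hbase0 _) hθd0]
      exact add_le_add hterm1 le_rfl
    have hβsum : ∑ i, ENNReal.ofReal (β i) * P (R i)
        = ENNReal.ofReal (∑ k, (P (R k)).toReal * β k) := by
      rw [ENNReal.ofReal_sum_of_nonneg
        (fun i _ => mul_nonneg ENNReal.toReal_nonneg (hβ i))]
      refine Finset.sum_congr rfl (fun i _ => ?_)
      rw [ENNReal.ofReal_mul ENNReal.toReal_nonneg, ENNReal.ofReal_toReal (measure_ne_top P _),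
        mul_comm]
    have hcostbound : (∫⁻ p, ENNReal.ofReal (‖p.1 - p.2‖ ^ ρ) ∂(γ.map gm))
        ≤ ENNReal.ofReal (αmax * ((θ ^ ρ + ε) ^ (1/ρ) + θd) ^ ρ
            + ∑ k, (P (R k)).toReal * β k) := by
      rw [hcη]
      refine le_trans (lintegral_mono_ae h1) ?_
      rw [h2, Finset.sum_add_distrib]
      rw [ENNReal.ofReal_add (mul_nonneg hαmax0 (Real.rpow_nonneg hsum0 _)) hB0, ← hβsum]
      refine add_le_add ?_ le_rfl
      refine le_trans h3 ?_
      rw [ENNReal.ofReal_mul hαmax0]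
      exact mul_le_mul_right hsumJ _
    -- conclude
    unfold Wass
    refine Real.rpow_le_rpow ENNReal.toReal_nonneg ?_ (le_of_lt hinvρ)
    refine ENNReal.toReal_le_of_le_ofReal hbε0 ?_
    exact le_trans (iInf₂_le _ hηC) hcostbound
  -- pass to the limit ε → 0⁺
  set g : ℝ → ℝ := fun ε =>
    (αmax * ((θ ^ ρ + ε) ^ (1/ρ) + θd) ^ ρ + ∑ k, (P (R k)).toReal * β k) ^ (1/ρ) with hgdef
  have hg0 : g 0 = (αmax * (θ + θd) ^ ρ + ∑ k, (P (R k)).toReal * β k) ^ (1/ρ) := by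
    rw [hgdef]
    simp only [add_zero]
    congr 3
    rw [← Real.rpow_mul hθ, mul_one_div_cancel hρne, Real.rpow_one]
  have hcont : ContinuousAt g 0 := by
    rw [hgdef]
    refine ContinuousAt.rpow_const ?_ (Or.inr (le_of_lt hinvρ))
    refine ContinuousAt.add ?_ continuousAt_const
    refine ContinuousAt.mul continuousAt_const ?_
    refine ContinuousAt.rpow_const ?_ (Or.inr hρ0')
    refine ContinuousAt.add ?_ continuousAt_const
    refine ContinuousAt.rpow_const ?_ (Or.inr (le_of_lt hinvρ))
    exact continuousAt_const.add continuousAt_id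
  have htend : Filter.Tendsto g (nhdsWithin 0 (Set.Ioi (0:ℝ))) (nhds (g 0)) :=
    hcont.continuousWithinAt.tendsto
  rw [← hg0]
  refine ge_of_tendsto htend ?_
  filter_upwards [eventually_mem_nhdsWithin] with ε hε
  exact key ε hε
end
end

section
/- Let X ⊆ ℝ^d, ρ ≥ 1, P a Borel probability measure on X with finite ρ-th moment, R = {R_1,…,R_N} a measurable partition of X, and C = {c_1,…,c_N} ⊂ X. Let f : X → Y ⊆ ℝ^q be Lipschitz continuous with Lipschitz constant L_f with respect to the norm used in the Wasserstein distance. Define θ_d := ( Σ_{k=1}^N ∫_{R_k} ‖x − c_k‖^ρ dP(x) )^{1/ρ}. Then for any θ ≥ 0, sup_{Q ∈ B_θ(P)} W_ρ(f#Q, f#Δ_{R,C}#P) ≤ L_f (θ + θ_d). -/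
open MeasureTheory ENNReal

noncomputable section

section Helpers

variable {β : Type*} [MeasurableSpace β] [NormedAddCommGroup β]

/-- Upper bound on the Wasserstein distance from a single coupling. -/
lemma Wass_le_of_coupling {ρ : ℝ} (hρ : 0 < ρ) {μ ν : Measure β} {γ : Measure (β × β)}
    (hγ : γ ∈ Couplings μ ν) {M : ℝ} (hM : 0 ≤ M)
    (hcost : ∫⁻ p, ENNReal.ofReal (‖p.1 - p.2‖ ^ ρ) ∂γ ≤ ENNReal.ofReal (M ^ ρ)) :
    Wass ρ μ ν ≤ M := by
  have hinf : (⨅ γ ∈ Couplings μ ν, ∫⁻ p, ENNReal.ofReal (‖p.1 - p.2‖ ^ ρ) ∂γ)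
      ≤ ENNReal.ofReal (M ^ ρ) := le_trans (iInf₂_le γ hγ) hcost
  have h1 : (⨅ γ ∈ Couplings μ ν, ∫⁻ p, ENNReal.ofReal (‖p.1 - p.2‖ ^ ρ) ∂γ).toReal
      ≤ M ^ ρ := ENNReal.toReal_le_of_le_ofReal (Real.rpow_nonneg hM ρ) hinf
  calc Wass ρ μ ν ≤ (M ^ ρ) ^ (1/ρ) :=
        Real.rpow_le_rpow ENNReal.toReal_nonneg h1 (by positivity)
    _ = M := by
        rw [← Real.rpow_mul hM, mul_one_div, div_self hρ.ne', Real.rpow_one]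

/-- Extraction: if the Wasserstein infimum is finite and `Wass ≤ θ`, the infimum is
at most `ofReal (θ^ρ)`. -/
lemma inf_le_of_Wass_le {ρ : ℝ} (hρ : 0 < ρ) {μ ν : Measure β} {θ : ℝ}
    (hfin : (⨅ γ ∈ Couplings μ ν, ∫⁻ p, ENNReal.ofReal (‖p.1 - p.2‖ ^ ρ) ∂γ) < ⊤)
    (hW : Wass ρ μ ν ≤ θ) :
    (⨅ γ ∈ Couplings μ ν, ∫⁻ p, ENNReal.ofReal (‖p.1 - p.2‖ ^ ρ) ∂γ)
      ≤ ENNReal.ofReal (θ ^ ρ) := by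
  set I := ⨅ γ ∈ Couplings μ ν, ∫⁻ p, ENNReal.ofReal (‖p.1 - p.2‖ ^ ρ) ∂γ with hI
  have h1 : I.toReal ≤ θ ^ ρ := by
    have h2 : (I.toReal ^ (1/ρ)) ^ ρ ≤ θ ^ ρ :=
      Real.rpow_le_rpow (Real.rpow_nonneg ENNReal.toReal_nonneg _) hW hρ.le
    rwa [← Real.rpow_mul ENNReal.toReal_nonneg, one_div_mul_cancel hρ.ne',
      Real.rpow_one] at h2
  calc I = ENNReal.ofReal I.toReal := (ENNReal.ofReal_toReal hfin.ne).symm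
    _ ≤ ENNReal.ofReal (θ ^ ρ) := ENNReal.ofReal_le_ofReal h1

/-- Finiteness of `∫⁻ (u+v)^ρ` from finiteness of the two `L^ρ` integrals. -/
lemma lintegral_add_rpow_lt_top {α : Type*} [MeasurableSpace α] {μ : Measure α}
    {ρ : ℝ} (hρ : 1 ≤ ρ) {u v : α → ℝ≥0∞} (hu : AEMeasurable u μ) (hv : AEMeasurable v μ)
    (hu2 : ∫⁻ x, u x ^ ρ ∂μ < ⊤) (hv2 : ∫⁻ x, v x ^ ρ ∂μ < ⊤) :
    ∫⁻ x, (u x + v x) ^ ρ ∂μ < ⊤ := by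
  have hρ0 : (0:ℝ) < ρ := lt_of_lt_of_le one_pos hρ
  have h := ENNReal.lintegral_Lp_add_le hu hv hρ
  have hrhs : (∫⁻ x, u x ^ ρ ∂μ) ^ (1/ρ) + (∫⁻ x, v x ^ ρ ∂μ) ^ (1/ρ) < ⊤ :=
    ENNReal.add_lt_top.2 ⟨ENNReal.rpow_lt_top_of_nonneg (by positivity) hu2.ne,
      ENNReal.rpow_lt_top_of_nonneg (by positivity) hv2.ne⟩
  by_contra hcon
  push_neg at hcon
  have htop : ∫⁻ x, ((u + v) x) ^ ρ ∂μ = ⊤ := top_le_iff.mp (by simpa using hcon)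
  rw [htop, ENNReal.top_rpow_of_pos (by positivity)] at h
  exact absurd (top_le_iff.mp h) (lt_top_iff_ne_top.mp hrhs)

omit [NormedAddCommGroup β] in
/-- Marginal substitution for lintegrals over a coupling (first coordinate). -/
lemma lintegral_fst_marginal {μ : Measure β} {γ : Measure (β × β)}
    (hfst : γ.map Prod.fst = μ) {g : β → ℝ≥0∞} (hg : Measurable g) :
    ∫⁻ p, g p.1 ∂γ = ∫⁻ x, g x ∂μ := by
  rw [← hfst, lintegral_map hg measurable_fst]

end Helpers
section Helpers2

variable {β : Type*} [MeasurableSpace β] [NormedAddCommGroup β] [OpensMeasurableSpace β]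

omit [NormedAddCommGroup β] [OpensMeasurableSpace β] in
/-- Marginal substitution for lintegrals over a coupling (second coordinate). -/
lemma lintegral_snd_marginal {μ : Measure β} {γ : Measure (β × β)}
    (hsnd : γ.map Prod.snd = μ) {g : β → ℝ≥0∞} (hg : Measurable g) :
    ∫⁻ p, g p.2 ∂γ = ∫⁻ x, g x ∂μ := by
  rw [← hsnd, lintegral_map hg measurable_snd]

/-- Finite ρ-th moment of `x ↦ x - c`. -/
lemma lintegral_rpow_sub_const_lt_top {ρ : ℝ} (hρ : 1 ≤ ρ) {μ : Measure β}
    [IsProbabilityMeasure μ] (hm : ∫⁻ x, ENNReal.ofReal ‖x‖ ^ ρ ∂μ < ⊤) (c : β) :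
    ∫⁻ x, ENNReal.ofReal ‖x - c‖ ^ ρ ∂μ < ⊤ := by
  have hρ0 : (0:ℝ) < ρ := lt_of_lt_of_le one_pos hρ
  have hle : ∫⁻ x, ENNReal.ofReal ‖x - c‖ ^ ρ ∂μ
      ≤ ∫⁻ x, (ENNReal.ofReal ‖x‖ + ENNReal.ofReal ‖c‖) ^ ρ ∂μ := by
    refine lintegral_mono fun x => ENNReal.rpow_le_rpow ?_ hρ0.le
    rw [← ENNReal.ofReal_add (norm_nonneg _) (norm_nonneg _)]
    exact ENNReal.ofReal_le_ofReal (norm_sub_le _ _)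
  refine lt_of_le_of_lt hle (lintegral_add_rpow_lt_top hρ ?_ aemeasurable_const hm ?_)
  · exact (measurable_norm.ennreal_ofReal).aemeasurable
  · rw [lintegral_const, measure_univ, mul_one]
    exact ENNReal.rpow_lt_top_of_nonneg hρ0.le ENNReal.ofReal_ne_top

omit [NormedAddCommGroup β] [OpensMeasurableSpace β] in
/-- The product measure is a coupling. -/
lemma prod_mem_couplings {μ ν : Measure β} [IsProbabilityMeasure μ]
    [IsProbabilityMeasure ν] : μ.prod ν ∈ Couplings μ ν := by
  refine ⟨inferInstance, ?_, ?_⟩ <;> simp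

/-- The Wasserstein infimum is finite when both measures have finite ρ-th moment. -/
lemma couplings_inf_lt_top {ρ : ℝ} (hρ : 1 ≤ ρ) {μ ν : Measure β}
    [IsProbabilityMeasure μ] [IsProbabilityMeasure ν]
    (hμ : HasFiniteMoment ρ μ) (hν : HasFiniteMoment ρ ν) :
    (⨅ γ ∈ Couplings μ ν, ∫⁻ p, ENNReal.ofReal (‖p.1 - p.2‖ ^ ρ) ∂γ) < ⊤ := by
  have hρ0 : (0:ℝ) < ρ := lt_of_lt_of_le one_pos hρ
  refine lt_of_le_of_lt (iInf₂_le _ prod_mem_couplings) ?_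
  have hle : ∫⁻ p : β × β, ENNReal.ofReal (‖p.1 - p.2‖ ^ ρ) ∂(μ.prod ν)
      ≤ ∫⁻ p : β × β, (ENNReal.ofReal ‖p.1‖ + ENNReal.ofReal ‖p.2‖) ^ ρ ∂(μ.prod ν) := by
    refine lintegral_mono fun p => ?_
    rw [← ENNReal.ofReal_rpow_of_nonneg (norm_nonneg _) hρ0.le]
    refine ENNReal.rpow_le_rpow ?_ hρ0.le
    rw [← ENNReal.ofReal_add (norm_nonneg _) (norm_nonneg _)]
    exact ENNReal.ofReal_le_ofReal (norm_sub_le _ _)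
  refine lt_of_le_of_lt hle (lintegral_add_rpow_lt_top hρ ?_ ?_ ?_ ?_)
  · exact (measurable_fst.norm.ennreal_ofReal).aemeasurable
  · exact (measurable_snd.norm.ennreal_ofReal).aemeasurable
  · have hfst : (μ.prod ν).map Prod.fst = μ := by simp
    rw [lintegral_fst_marginal hfst (measurable_norm.ennreal_ofReal.pow_const ρ)]
    unfold HasFiniteMoment at hμ
    calc ∫⁻ x, ENNReal.ofReal ‖x‖ ^ ρ ∂μ
        = ∫⁻ x, ENNReal.ofReal (‖x‖ ^ ρ) ∂μ := by
          refine lintegral_congr fun x => ?_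
          rw [ENNReal.ofReal_rpow_of_nonneg (norm_nonneg _) hρ0.le]
      _ < ⊤ := hμ
  · have hsnd : (μ.prod ν).map Prod.snd = ν := by simp
    rw [lintegral_snd_marginal hsnd (measurable_norm.ennreal_ofReal.pow_const ρ)]
    unfold HasFiniteMoment at hν
    calc ∫⁻ x, ENNReal.ofReal ‖x‖ ^ ρ ∂ν
        = ∫⁻ x, ENNReal.ofReal (‖x‖ ^ ρ) ∂ν := by
          refine lintegral_congr fun x => ?_
          rw [ENNReal.ofReal_rpow_of_nonneg (norm_nonneg _) hρ0.le]
      _ < ⊤ := hν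

end Helpers2
section Main

lemma quantMap_eq_of_mem {β : Type*} [AddCommMonoid β] {N : ℕ} {R : Fin N → Set β}
    (hd : ∀ i j, i ≠ j → R i ∩ R j = ∅) (c : Fin N → β) {k : Fin N} {x : β}
    (hx : x ∈ R k) : quantMap R c x = c k := by
  unfold quantMap
  rw [Finset.sum_eq_single k]
  · exact Set.indicator_of_mem hx _
  · intro i _ hik
    refine Set.indicator_of_notMem (fun hxi => ?_) _
    have := hd i k hik
    exact absurd (Set.mem_inter hxi hx) (by rw [this]; exact Set.notMem_empty x)
  · intro h; exact absurd (Finset.mem_univ k) h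

/-- Lipschitz-based uncertainty propagation. If `f` is Lipschitz with
constant `L_f` and `θ_d = (Σ_k ∫_{R_k} ‖x - c_k‖^ρ dP)^{1/ρ}`, then every `Q ∈ B_θ(P)`
satisfies `W_ρ(f#Q, f#Δ_{R,C}#P) ≤ L_f (θ + θ_d)`. -/
theorem stmt4 {d q N : ℕ} (ρ : ℝ) (hρ : 1 ≤ ρ) (θ : ℝ) (hθ : 0 ≤ θ)
    (X : Set (Euc d)) (hXm : MeasurableSet X) (Y : Set (Euc q))
    (P : Measure (Euc d)) (hP : IsProbabilityMeasure P) (hPX : P X = 1)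
    (hPm : HasFiniteMoment ρ P)
    (R : Fin N → Set (Euc d)) (hR : IsMeasPartition R X)
    (c : Fin N → Euc d) (hc : ∀ k, c k ∈ X)
    (f : Euc d → Euc q) (hf : Measurable f) (hfXY : Set.MapsTo f X Y)
    (Lf : NNReal) (hLip : LipschitzWith Lf f)
    (θd : ℝ) (hθd : θd = (∑ k, ∫ x in R k, ‖x - c k‖ ^ ρ ∂P) ^ (1/ρ)) :
    ∀ Q : Measure (Euc d), IsProbabilityMeasure Q → Q X = 1 → HasFiniteMoment ρ Q →
      Wass ρ P Q ≤ θ →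
      Wass ρ (Q.map f) ((P.map (quantMap R c)).map f) ≤ (Lf : ℝ) * (θ + θd) := by
  intro Q hQ hQX hQm hW
  haveI := hP; haveI := hQ
  have hρ0 : (0:ℝ) < ρ := lt_of_lt_of_le one_pos hρ
  set Δ := quantMap R c with hΔdef
  have hΔm : Measurable Δ := by
    apply Finset.measurable_sum
    intro i _
    exact measurable_const.indicator (hR.1 i)
  -- θd facts
  set S : ℝ := ∑ k, ∫ x in R k, ‖x - c k‖ ^ ρ ∂P with hS
  have hSnn : 0 ≤ S :=
    Finset.sum_nonneg fun k _ => integral_nonneg fun x => Real.rpow_nonneg (norm_nonneg _) _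
  have hθdnn : 0 ≤ θd := hθd ▸ Real.rpow_nonneg hSnn _
  have hθdρ : θd ^ ρ = S := by
    rw [hθd, ← Real.rpow_mul hSnn, one_div_mul_cancel hρ0.ne', Real.rpow_one]
  -- key identity
  have hkey : ∫⁻ x, ENNReal.ofReal ‖x - Δ x‖ ^ ρ ∂P = ENNReal.ofReal (θd ^ ρ) := by
    have hXc : P Xᶜ = 0 := by
      rw [measure_compl hXm (measure_ne_top P X), hPX, measure_univ]; exact tsub_self 1
    have hsplit : ∫⁻ x, ENNReal.ofReal ‖x - Δ x‖ ^ ρ ∂P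
        = ∫⁻ x in X, ENNReal.ofReal ‖x - Δ x‖ ^ ρ ∂P := by
      rw [← lintegral_add_compl (fun x => ENNReal.ofReal ‖x - Δ x‖ ^ ρ) hXm,
        setLIntegral_measure_zero _ _ hXc, add_zero]
    rw [hsplit, ← hR.2.1]
    have hdisj : Pairwise (Function.onFun Disjoint R) := fun i j hij =>
      Set.disjoint_iff_inter_eq_empty.2 (hR.2.2 i j hij)
    rw [lintegral_iUnion hR.1 hdisj, tsum_fintype]
    have hterm : ∀ k, ∫⁻ x in R k, ENNReal.ofReal ‖x - Δ x‖ ^ ρ ∂P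
        = ENNReal.ofReal (∫ x in R k, ‖x - c k‖ ^ ρ ∂P) := by
      intro k
      have h1 : ∫⁻ x in R k, ENNReal.ofReal ‖x - Δ x‖ ^ ρ ∂P
          = ∫⁻ x in R k, ENNReal.ofReal (‖x - c k‖ ^ ρ) ∂P := by
        refine setLIntegral_congr_fun (hR.1 k) (fun x hx => ?_)
        rw [hΔdef, quantMap_eq_of_mem hR.2.2 c hx,
          ENNReal.ofReal_rpow_of_nonneg (norm_nonneg _) hρ0.le]
      have hint : Integrable (fun x => ‖x - c k‖ ^ ρ) (P.restrict (R k)) := by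
        refine Integrable.restrict ?_
        constructor
        · exact ((continuous_id.sub continuous_const).norm.rpow_const
            (fun x => Or.inr hρ0.le)).aestronglyMeasurable
        · rw [hasFiniteIntegral_iff_norm]
          have : ∫⁻ x, ENNReal.ofReal ‖‖x - c k‖ ^ ρ‖ ∂P
              = ∫⁻ x, ENNReal.ofReal ‖x - c k‖ ^ ρ ∂P := by
            refine lintegral_congr fun x => ?_
            rw [Real.norm_of_nonneg (Real.rpow_nonneg (norm_nonneg _) _),
              ENNReal.ofReal_rpow_of_nonneg (norm_nonneg _) hρ0.le]
          rw [this]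
          refine lintegral_rpow_sub_const_lt_top hρ ?_ (c k)
          calc ∫⁻ x, ENNReal.ofReal ‖x‖ ^ ρ ∂P
              = ∫⁻ x, ENNReal.ofReal (‖x‖ ^ ρ) ∂P := by
                refine lintegral_congr fun x => ?_
                rw [ENNReal.ofReal_rpow_of_nonneg (norm_nonneg _) hρ0.le]
            _ < ⊤ := hPm
      rw [h1, ← ofReal_integral_eq_lintegral_ofReal hint
        (ae_of_all _ fun x => Real.rpow_nonneg (norm_nonneg _) _)]
    rw [hθdρ, hS]
    calc ∑ k, ∫⁻ x in R k, ENNReal.ofReal ‖x - Δ x‖ ^ ρ ∂P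
        = ∑ k, ENNReal.ofReal (∫ x in R k, ‖x - c k‖ ^ ρ ∂P) :=
          Finset.sum_congr rfl fun k _ => hterm k
      _ = ENNReal.ofReal (∑ k, ∫ x in R k, ‖x - c k‖ ^ ρ ∂P) :=
          (ENNReal.ofReal_sum_of_nonneg fun k _ =>
            integral_nonneg fun x => Real.rpow_nonneg (norm_nonneg _) _).symm
  -- infimum bound for P, Q
  have hfin := couplings_inf_lt_top hρ hPm hQm (μ := P) (ν := Q)
  have hI := inf_le_of_Wass_le hρ0 hfin hW
  -- the per-ε bound
  have hmain : ∀ ε : ℝ, 0 < ε →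
      Wass ρ (Q.map f) ((P.map Δ).map f) ≤ (Lf : ℝ) * ((θ ^ ρ + ε) ^ (1/ρ) + θd) := by
    intro ε hε
    have hlt : (⨅ γ ∈ Couplings P Q, ∫⁻ p, ENNReal.ofReal (‖p.1 - p.2‖ ^ ρ) ∂γ)
        < ENNReal.ofReal (θ ^ ρ + ε) := by
      rw [ENNReal.ofReal_add (Real.rpow_nonneg hθ ρ) hε.le]
      have hε' : (0:ℝ≥0∞) < ENNReal.ofReal ε := ENNReal.ofReal_pos.2 hε
      exact lt_of_le_of_lt hI (ENNReal.lt_add_right ENNReal.ofReal_ne_top hε'.ne')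
    obtain ⟨γ, hγlt⟩ := iInf_lt_iff.mp hlt
    obtain ⟨hγ, hγc⟩ := iInf_lt_iff.mp hγlt
    haveI : IsProbabilityMeasure γ := hγ.1
    set T : Euc d × Euc d → Euc q × Euc q := fun p => (f p.2, f (Δ p.1)) with hT
    have hTm : Measurable T :=
      (hf.comp measurable_snd).prodMk (hf.comp (hΔm.comp measurable_fst))
    have hγ'cpl : γ.map T ∈ Couplings (Q.map f) ((P.map Δ).map f) := by
      refine ⟨Measure.isProbabilityMeasure_map hTm.aemeasurable, ?_, ?_⟩
      · rw [Measure.map_map measurable_fst hTm]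
        have h1 : (Prod.fst ∘ T) = f ∘ Prod.snd := rfl
        rw [h1, ← Measure.map_map hf measurable_snd, hγ.2.2]
      · rw [Measure.map_map measurable_snd hTm]
        have h1 : (Prod.snd ∘ T) = (f ∘ Δ) ∘ Prod.fst := rfl
        rw [h1, ← Measure.map_map (hf.comp hΔm) measurable_fst, hγ.2.1,
          ← Measure.map_map hf hΔm]
    set u : Euc d × Euc d → ℝ≥0∞ := fun p => ENNReal.ofReal ‖p.1 - p.2‖ with hu
    set v : Euc d × Euc d → ℝ≥0∞ := fun p => ENNReal.ofReal ‖p.1 - Δ p.1‖ with hv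
    have hum : Measurable u := (measurable_fst.sub measurable_snd).norm.ennreal_ofReal
    have hvm : Measurable v :=
      (measurable_fst.sub (hΔm.comp measurable_fst)).norm.ennreal_ofReal
    -- cost of the pushforward coupling
    have hcost1 : ∫⁻ p, ENNReal.ofReal (‖p.1 - p.2‖ ^ ρ) ∂(γ.map T)
        ≤ (Lf : ℝ≥0∞) ^ ρ * ∫⁻ p, (u p + v p) ^ ρ ∂γ := by
      rw [lintegral_map (f := fun p : Euc q × Euc q => ENNReal.ofReal (‖p.1 - p.2‖ ^ ρ))
        (((continuous_fst.sub continuous_snd).norm.rpow_const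
          (fun x => Or.inr hρ0.le)).measurable.ennreal_ofReal) hTm]
      calc ∫⁻ p, ENNReal.ofReal (‖(T p).1 - (T p).2‖ ^ ρ) ∂γ
          ≤ ∫⁻ p, ((Lf : ℝ≥0∞) * (u p + v p)) ^ ρ ∂γ := by
            refine lintegral_mono fun p => ?_
            rw [← ENNReal.ofReal_rpow_of_nonneg (norm_nonneg _) hρ0.le]
            refine ENNReal.rpow_le_rpow ?_ hρ0.le
            have h1 : ‖f p.2 - f (Δ p.1)‖ ≤ (Lf : ℝ) * ‖p.2 - Δ p.1‖ := by
              simpa [dist_eq_norm] using hLip.dist_le_mul p.2 (Δ p.1)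
            have h2 : ‖p.2 - Δ p.1‖ ≤ ‖p.1 - p.2‖ + ‖p.1 - Δ p.1‖ := by
              have h3 : p.2 - Δ p.1 = -(p.1 - p.2) + (p.1 - Δ p.1) := by abel
              calc ‖p.2 - Δ p.1‖ = ‖-(p.1 - p.2) + (p.1 - Δ p.1)‖ := by rw [← h3]
                _ ≤ ‖-(p.1 - p.2)‖ + ‖p.1 - Δ p.1‖ := norm_add_le _ _
                _ = ‖p.1 - p.2‖ + ‖p.1 - Δ p.1‖ := by rw [norm_neg]
            calc ENNReal.ofReal ‖(T p).1 - (T p).2‖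
                ≤ ENNReal.ofReal ((Lf : ℝ) * (‖p.1 - p.2‖ + ‖p.1 - Δ p.1‖)) :=
                  ENNReal.ofReal_le_ofReal
                    (h1.trans (mul_le_mul_of_nonneg_left h2 Lf.2))
              _ = (Lf : ℝ≥0∞) * (u p + v p) := by
                  rw [ENNReal.ofReal_mul Lf.coe_nonneg, ENNReal.ofReal_coe_nnreal,
                    ENNReal.ofReal_add (norm_nonneg _) (norm_nonneg _)]
        _ = (Lf : ℝ≥0∞) ^ ρ * ∫⁻ p, (u p + v p) ^ ρ ∂γ := by
            have h4 : ∀ p, ((Lf : ℝ≥0∞) * (u p + v p)) ^ ρ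
                = (Lf : ℝ≥0∞) ^ ρ * (u p + v p) ^ ρ := fun p =>
              ENNReal.mul_rpow_of_nonneg _ _ hρ0.le
            simp_rw [h4]
            exact lintegral_const_mul _ ((hum.add hvm).pow_const ρ)
    -- Minkowski
    have hA : (∫⁻ p, u p ^ ρ ∂γ) ^ (1/ρ) ≤ ENNReal.ofReal ((θ ^ ρ + ε) ^ (1/ρ)) := by
      have h5 : ∫⁻ p, u p ^ ρ ∂γ = ∫⁻ p, ENNReal.ofReal (‖p.1 - p.2‖ ^ ρ) ∂γ := by
        refine lintegral_congr fun p => ?_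
        rw [hu, ENNReal.ofReal_rpow_of_nonneg (norm_nonneg _) hρ0.le]
      rw [h5, ← ENNReal.ofReal_rpow_of_nonneg (by positivity) (by positivity)]
      exact ENNReal.rpow_le_rpow hγc.le (by positivity)
    have hB : (∫⁻ p, v p ^ ρ ∂γ) ^ (1/ρ) = ENNReal.ofReal θd := by
      have h5 : ∫⁻ p, v p ^ ρ ∂γ = ∫⁻ x, ENNReal.ofReal ‖x - Δ x‖ ^ ρ ∂P := by
        exact lintegral_fst_marginal hγ.2.1
          (g := fun x => ENNReal.ofReal ‖x - Δ x‖ ^ ρ)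
          (((measurable_id.sub hΔm).norm.ennreal_ofReal).pow_const ρ)
      rw [h5, hkey, ENNReal.ofReal_rpow_of_nonneg (Real.rpow_nonneg hθdnn ρ)
        (by positivity), ← Real.rpow_mul hθdnn, mul_one_div, div_self hρ0.ne',
        Real.rpow_one]
    have hK : ∫⁻ p, (u p + v p) ^ ρ ∂γ
        ≤ ENNReal.ofReal (((θ ^ ρ + ε) ^ (1/ρ) + θd) ^ ρ) := by
      have hMink := ENNReal.lintegral_Lp_add_le (μ := γ) hum.aemeasurable hvm.aemeasurable hρ
      have h6 : (∫⁻ p, (u p + v p) ^ ρ ∂γ) ^ (1/ρ)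
          ≤ ENNReal.ofReal ((θ ^ ρ + ε) ^ (1/ρ) + θd) := by
        refine le_trans (le_trans (le_of_eq ?_) hMink) ?_
        · rfl
        · rw [ENNReal.ofReal_add (by positivity) hθdnn]
          exact add_le_add hA hB.le
      calc ∫⁻ p, (u p + v p) ^ ρ ∂γ
          = ((∫⁻ p, (u p + v p) ^ ρ ∂γ) ^ (1/ρ)) ^ ρ := by
            rw [← ENNReal.rpow_mul, one_div_mul_cancel hρ0.ne', ENNReal.rpow_one]
        _ ≤ (ENNReal.ofReal ((θ ^ ρ + ε) ^ (1/ρ) + θd)) ^ ρ :=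
            ENNReal.rpow_le_rpow h6 hρ0.le
        _ = ENNReal.ofReal (((θ ^ ρ + ε) ^ (1/ρ) + θd) ^ ρ) :=
            ENNReal.ofReal_rpow_of_nonneg (by positivity) hρ0.le
    refine Wass_le_of_coupling hρ0 hγ'cpl (by positivity) ?_
    calc ∫⁻ p, ENNReal.ofReal (‖p.1 - p.2‖ ^ ρ) ∂(γ.map T)
        ≤ (Lf : ℝ≥0∞) ^ ρ * ∫⁻ p, (u p + v p) ^ ρ ∂γ := hcost1
      _ ≤ (Lf : ℝ≥0∞) ^ ρ * ENNReal.ofReal (((θ ^ ρ + ε) ^ (1/ρ) + θd) ^ ρ) :=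
          mul_le_mul_right hK _
      _ = ENNReal.ofReal (((Lf : ℝ) * ((θ ^ ρ + ε) ^ (1/ρ) + θd)) ^ ρ) := by
          rw [← ENNReal.ofReal_coe_nnreal,
            ENNReal.ofReal_rpow_of_nonneg Lf.coe_nonneg hρ0.le,
            ← ENNReal.ofReal_mul (Real.rpow_nonneg Lf.coe_nonneg ρ),
            ← Real.mul_rpow Lf.coe_nonneg (by positivity)]
  -- take the limit ε → 0⁺
  have htend : Filter.Tendsto (fun ε : ℝ => (Lf : ℝ) * ((θ ^ ρ + ε) ^ (1/ρ) + θd))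
      (nhdsWithin 0 (Set.Ioi 0)) (nhds ((Lf : ℝ) * (θ + θd))) := by
    have h1 : Filter.Tendsto (fun ε : ℝ => θ ^ ρ + ε) (nhdsWithin 0 (Set.Ioi 0))
        (nhds (θ ^ ρ)) := by
      have hcont : Continuous (fun ε : ℝ => θ ^ ρ + ε) :=
        continuous_const.add continuous_id
      have := (hcont.tendsto 0).mono_left
        (nhdsWithin_le_nhds (s := Set.Ioi (0:ℝ)))
      simpa using this
    have h2 : Filter.Tendsto (fun ε : ℝ => (θ ^ ρ + ε) ^ (1/ρ))
        (nhdsWithin 0 (Set.Ioi 0)) (nhds θ) := by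
      have h3 := h1.rpow_const (p := 1/ρ) (Or.inr (by positivity))
      rwa [← Real.rpow_mul hθ, mul_one_div, div_self hρ0.ne', Real.rpow_one] at h3
    exact (h2.add_const θd).const_mul _
  exact ge_of_tendsto htend
    (Filter.eventually_iff_exists_mem.2 ⟨Set.Ioi 0, self_mem_nhdsWithin,
      fun ε hε => hmain ε hε⟩)
end Main
end
end

section
/- Let X ⊆ ℝ^d, ρ ≥ 1, P a Borel probability measure on X with finite ρ-th moment, R = {R_1,…,R_N} a measurable partition of X, and C = {c_1,…,c_N} ⊂ X. Let f : X → Y ⊆ ℝ^q be measurable, and for each k let π_k := P(R_k) and let α_k, β_k ≥ 0 satisfy ‖f(x) − f(c_k)‖^ρ ≤ α_k ‖x − c_k‖^ρ + β_k for all x ∈ R_k (a local linearization, required only on the region R_k). Then W_ρ(f#P, f#Δ_{R,C}#P) ≤ ( Σ_{k=1}^N α_k ∫_{R_k} ‖x − c_k‖^ρ dP(x) + Σ_{k=1}^N π_k β_k )^{1/ρ}. -/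
open MeasureTheory ENNReal

noncomputable section

lemma quant_eq_on {β : Type*} [AddCommMonoid β] {N : ℕ} {R : Fin N → Set β} {c : Fin N → β}
    (hdisj : ∀ i j, i ≠ j → R i ∩ R j = ∅) {k : Fin N} {x : β} (hx : x ∈ R k) :
    quantMap R c x = c k := by
  unfold quantMap
  rw [Finset.sum_eq_single k]
  · simp [Set.indicator_of_mem hx]
  · intro j _ hj
    have hxj : x ∉ R j := fun h => by
      have := hdisj j k hj
      exact absurd (Set.mem_inter h hx) (by simp [this])
    simp [Set.indicator_of_notMem hxj]
  · simp

/-- Theorem: uncertainty propagation under no ambiguity. With local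
linearization coefficients `α_k, β_k ≥ 0` such that
`‖f(x) - f(c_k)‖^ρ ≤ α_k ‖x - c_k‖^ρ + β_k` for all `x ∈ R_k`, and `π_k = P(R_k)`,
`W_ρ(f#P, f#Δ_{R,C}#P) ≤ (Σ_k α_k ∫_{R_k} ‖x - c_k‖^ρ dP + Σ_k π_k β_k)^{1/ρ}`. -/
theorem stmt6 {d q N : ℕ} (ρ : ℝ) (hρ : 1 ≤ ρ)
    (X : Set (Euc d)) (hXm : MeasurableSet X) (Y : Set (Euc q))
    (P : Measure (Euc d)) (hP : IsProbabilityMeasure P) (hPX : P X = 1)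
    (hPm : HasFiniteMoment ρ P)
    (R : Fin N → Set (Euc d)) (hR : IsMeasPartition R X)
    (c : Fin N → Euc d) (hc : ∀ k, c k ∈ X)
    (f : Euc d → Euc q) (hf : Measurable f) (hfXY : Set.MapsTo f X Y)
    (hfPm : HasFiniteMoment ρ (P.map f))
    (hfΔm : HasFiniteMoment ρ ((P.map (quantMap R c)).map f))
    (α β : Fin N → ℝ) (hα : ∀ k, 0 ≤ α k) (hβ : ∀ k, 0 ≤ β k)
    (hlin : ∀ k, ∀ x ∈ R k, ‖f x - f (c k)‖ ^ ρ ≤ α k * ‖x - c k‖ ^ ρ + β k) :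
    Wass ρ (P.map f) ((P.map (quantMap R c)).map f) ≤
      (∑ k, α k * ∫ x in R k, ‖x - c k‖ ^ ρ ∂P +
        ∑ k, (P (R k)).toReal * β k) ^ (1/ρ) := by

  obtain ⟨hRm, hRX, hRdisj⟩ := hR
  have hρ0 : (0:ℝ) < ρ := lt_of_lt_of_le zero_lt_one hρ
  have hΔ : Measurable (quantMap R c) := by
    unfold quantMap
    exact Finset.measurable_sum _ fun i _ => measurable_const.indicator (hRm i)
  have hnorm : Measurable fun p : Euc q × Euc q => ENNReal.ofReal (‖p.1 - p.2‖ ^ ρ) :=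
    ((measurable_fst.sub measurable_snd).norm.pow_const ρ).ennreal_ofReal
  -- the coupling
  set g : Euc d → Euc q × Euc q := fun x => (f x, f (quantMap R c x)) with hg
  have hgm : Measurable g := hf.prodMk (hf.comp hΔ)
  have hγc : P.map g ∈ Couplings (P.map f) ((P.map (quantMap R c)).map f) := by
    refine ⟨Measure.isProbabilityMeasure_map hgm.aemeasurable, ?_, ?_⟩
    · rw [Measure.map_map measurable_fst hgm]; rfl
    · rw [Measure.map_map measurable_snd hgm, Measure.map_map hf hΔ]; rfl
  -- per-region Lebesgue integrals
  set J : Fin N → ℝ≥0∞ := fun k => ∫⁻ x in R k, ENNReal.ofReal (‖x - c k‖ ^ ρ) ∂P with hJ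
  have hJfin : ∀ k, J k ≠ ⊤ := by
    intro k
    have hb : ∀ x : Euc d, ENNReal.ofReal (‖x - c k‖ ^ ρ)
        ≤ (2:ℝ≥0∞) ^ (ρ - 1) * (ENNReal.ofReal (‖x‖ ^ ρ) + ENNReal.ofReal (‖c k‖ ^ ρ)) := by
      intro x
      rw [← ENNReal.ofReal_rpow_of_nonneg (norm_nonneg _) hρ0.le,
        ← ENNReal.ofReal_rpow_of_nonneg (norm_nonneg _) hρ0.le,
        ← ENNReal.ofReal_rpow_of_nonneg (norm_nonneg _) hρ0.le]
      calc ENNReal.ofReal ‖x - c k‖ ^ ρ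
          ≤ (ENNReal.ofReal ‖x‖ + ENNReal.ofReal ‖c k‖) ^ ρ := by
            refine ENNReal.rpow_le_rpow ?_ hρ0.le
            rw [← ENNReal.ofReal_add (norm_nonneg _) (norm_nonneg _)]
            exact ENNReal.ofReal_le_ofReal (norm_sub_le _ _)
        _ ≤ (2:ℝ≥0∞) ^ (ρ - 1) * (ENNReal.ofReal ‖x‖ ^ ρ + ENNReal.ofReal ‖c k‖ ^ ρ) :=
            ENNReal.rpow_add_le_mul_rpow_add_rpow _ _ hρ
    have : J k ≤ (2:ℝ≥0∞) ^ (ρ - 1) *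
        ((∫⁻ x, ENNReal.ofReal (‖x‖ ^ ρ) ∂P) + ENNReal.ofReal (‖c k‖ ^ ρ)) := by
      calc J k ≤ ∫⁻ x, ENNReal.ofReal (‖x - c k‖ ^ ρ) ∂P :=
            setLIntegral_le_lintegral _ _
        _ ≤ ∫⁻ x, (2:ℝ≥0∞) ^ (ρ - 1) *
              (ENNReal.ofReal (‖x‖ ^ ρ) + ENNReal.ofReal (‖c k‖ ^ ρ)) ∂P :=
            lintegral_mono hb
        _ = (2:ℝ≥0∞) ^ (ρ - 1) *
              ((∫⁻ x, ENNReal.ofReal (‖x‖ ^ ρ) ∂P) + ENNReal.ofReal (‖c k‖ ^ ρ)) := by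
            rw [lintegral_const_mul _ (show Measurable fun x : Euc d => ENNReal.ofReal (‖x‖ ^ ρ) + ENNReal.ofReal (‖c k‖ ^ ρ) from ((measurable_norm.pow_const ρ).ennreal_ofReal).add measurable_const),
              lintegral_add_right _ measurable_const, lintegral_const, measure_univ, mul_one]
    refine ne_top_of_le_ne_top ?_ this
    exact (ENNReal.mul_lt_top (ENNReal.rpow_lt_top_of_nonneg (by linarith) ENNReal.ofNat_ne_top)
      (ENNReal.add_lt_top.mpr ⟨hPm, ENNReal.ofReal_lt_top⟩)).ne
  -- the total bound in ℝ≥0∞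
  set T : ℝ≥0∞ := ∑ k, (ENNReal.ofReal (α k) * J k + ENNReal.ofReal (β k) * P (R k)) with hT
  have hTfin : T ≠ ⊤ := by
    refine (ENNReal.sum_lt_top.mpr fun k _ => ?_).ne
    exact ENNReal.add_lt_top.mpr ⟨ENNReal.mul_lt_top ENNReal.ofReal_lt_top (hJfin k).lt_top,
      ENNReal.mul_lt_top ENNReal.ofReal_lt_top (measure_lt_top P _)⟩
  -- bound the transport cost of the coupling
  have hI : ∫⁻ p, ENNReal.ofReal (‖p.1 - p.2‖ ^ ρ) ∂(P.map g) ≤ T := by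
    rw [lintegral_map hnorm hgm]
    have hae : ∀ᵐ x ∂P, x ∈ X := by
      have hc0 : P Xᶜ = 0 := by
        have := measure_compl hXm (measure_ne_top P X)
        rw [hPX, measure_univ, tsub_self] at this
        exact this
      exact ae_iff.mpr hc0
    have hres : P.restrict X = P := Measure.restrict_eq_self_of_ae_mem hae
    have hdisj' : Pairwise (Function.onFun Disjoint R) := fun i j hij =>
      Set.disjoint_iff_inter_eq_empty.mpr (hRdisj i j hij)
    calc ∫⁻ x, ENNReal.ofReal (‖f x - f (quantMap R c x)‖ ^ ρ) ∂P
        = ∫⁻ x in ⋃ i, R i, ENNReal.ofReal (‖f x - f (quantMap R c x)‖ ^ ρ) ∂P := by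
          rw [hRX, hres]
      _ = ∑' k, ∫⁻ x in R k, ENNReal.ofReal (‖f x - f (quantMap R c x)‖ ^ ρ) ∂P :=
          lintegral_iUnion hRm hdisj' _
      _ = ∑ k, ∫⁻ x in R k, ENNReal.ofReal (‖f x - f (quantMap R c x)‖ ^ ρ) ∂P :=
          tsum_fintype _
      _ ≤ T := by
          refine Finset.sum_le_sum fun k _ => ?_
          have h1 : ∫⁻ x in R k, ENNReal.ofReal (‖f x - f (quantMap R c x)‖ ^ ρ) ∂P
              = ∫⁻ x in R k, ENNReal.ofReal (‖f x - f (c k)‖ ^ ρ) ∂P :=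
            setLIntegral_congr_fun (hRm k)
              (fun x hx => by simp only [quant_eq_on hRdisj hx])
          rw [h1]
          calc ∫⁻ x in R k, ENNReal.ofReal (‖f x - f (c k)‖ ^ ρ) ∂P
              ≤ ∫⁻ x in R k,
                  (ENNReal.ofReal (α k) * ENNReal.ofReal (‖x - c k‖ ^ ρ)
                    + ENNReal.ofReal (β k)) ∂P := by
                refine setLIntegral_mono
                  (((((measurable_id'.sub measurable_const).norm.pow_const ρ).ennreal_ofReal).const_mul _).add
                    measurable_const) fun x hx => ?_
                calc ENNReal.ofReal (‖f x - f (c k)‖ ^ ρ)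
                    ≤ ENNReal.ofReal (α k * ‖x - c k‖ ^ ρ + β k) :=
                      ENNReal.ofReal_le_ofReal (hlin k x hx)
                  _ ≤ ENNReal.ofReal (α k * ‖x - c k‖ ^ ρ) + ENNReal.ofReal (β k) :=
                      ENNReal.ofReal_add_le
                  _ = ENNReal.ofReal (α k) * ENNReal.ofReal (‖x - c k‖ ^ ρ)
                        + ENNReal.ofReal (β k) := by
                      rw [ENNReal.ofReal_mul (hα k)]
            _ = ENNReal.ofReal (α k) * J k + ENNReal.ofReal (β k) * P (R k) := by
                rw [lintegral_add_right _ measurable_const,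
                  lintegral_const_mul _ (show Measurable fun x : Euc d => ENNReal.ofReal (‖x - c k‖ ^ ρ) from ((measurable_id'.sub measurable_const).norm.pow_const ρ).ennreal_ofReal),
                  setLIntegral_const]
  -- identify T.toReal with the RHS base
  have hJt : ∀ k, ∫ x in R k, ‖x - c k‖ ^ ρ ∂P = (J k).toReal := fun k =>
    integral_eq_lintegral_of_nonneg_ae (ae_of_all _ fun x => Real.rpow_nonneg (norm_nonneg _) ρ)
      (((measurable_id'.sub measurable_const).norm.pow_const ρ).aestronglyMeasurable)
  have hTt : T.toReal = ∑ k, α k * ∫ x in R k, ‖x - c k‖ ^ ρ ∂P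
      + ∑ k, (P (R k)).toReal * β k := by
    rw [hT, ENNReal.toReal_sum fun k _ => (ENNReal.add_lt_top.mpr
      ⟨ENNReal.mul_lt_top ENNReal.ofReal_lt_top (hJfin k).lt_top,
        ENNReal.mul_lt_top ENNReal.ofReal_lt_top (measure_lt_top P _)⟩).ne]
    rw [← Finset.sum_add_distrib]
    refine Finset.sum_congr rfl fun k _ => ?_
    rw [ENNReal.toReal_add (ENNReal.mul_lt_top ENNReal.ofReal_lt_top (hJfin k).lt_top).ne
        (ENNReal.mul_lt_top ENNReal.ofReal_lt_top (measure_lt_top P _)).ne,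
      ENNReal.toReal_mul, ENNReal.toReal_mul,
      ENNReal.toReal_ofReal (hα k), ENNReal.toReal_ofReal (hβ k), hJt k, mul_comm (β k)]
  -- conclude
  have hinf : (⨅ γ ∈ Couplings (P.map f) ((P.map (quantMap R c)).map f),
      ∫⁻ p, ENNReal.ofReal (‖p.1 - p.2‖ ^ ρ) ∂γ) ≤ T :=
    le_trans (iInf₂_le (P.map g) hγc) hI
  unfold Wass
  rw [← hTt]
  exact Real.rpow_le_rpow ENNReal.toReal_nonneg (ENNReal.toReal_mono hTfin hinf)
    (by positivity)
end
end

section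
/- Let X ⊆ ℝ^d, ρ ≥ 1, and P a Borel probability measure on X with finite ρ-th moment, and let f : X → Y ⊆ ℝ^q be Lipschitz continuous with constant L_f with respect to the L_ρ-norm. Fix ε > 0 and let X̄ ⊆ X be a cubic compact set such that ∫_{X \ X̄} ‖x − c̄‖^ρ dP(x) ≤ ε^ρ / (2 L_f^ρ) for some c̄ ∈ X. Let R = {R_k}_{k=1}^N be a uniform partition of X̄ into N ≥ ( 2^{1/ρ} L_f d^{1/ρ} ‖X̄‖_∞ / ε )^d congruent hypercubic regions (where ‖X̄‖_∞ denotes the side length of the cube X̄), and let C be the set of centers of the hypercubes R_k. Set R* := R ∪ {X \ X̄} and C* := C ∪ {c̄}. Then for any θ ≥ 0, | sup_{Q ∈ B_θ(P)} W_ρ(f#Q, f#Δ_{R*,C*}#P) − sup_{Q ∈ B_θ(P)} W_ρ(f#Q, f#P) | ≤ ε. -/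
open MeasureTheory ENNReal

noncomputable section

/-- The `L_ρ`-norm on `ℝ^n`: `(Σ_i |x_i|^ρ)^{1/ρ}`. -/
noncomputable def pnorm {n : ℕ} (ρ : ℝ) (x : Fin n → ℝ) : ℝ :=
  (∑ i, |x i| ^ ρ) ^ (1/ρ)

/-- The ρ-Wasserstein distance on `ℝ^n` with ground cost the `L_ρ`-norm. -/
noncomputable def WassP {n : ℕ} (ρ : ℝ) (μ ν : Measure (Fin n → ℝ)) : ℝ :=
  ((⨅ γ ∈ Couplings μ ν,
      ∫⁻ p, ENNReal.ofReal (pnorm ρ (p.1 - p.2) ^ ρ) ∂γ).toReal) ^ (1/ρ)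

/-- `μ` has finite ρ-th moment w.r.t. the `L_ρ`-norm. -/
def HasFiniteMomentP {n : ℕ} (ρ : ℝ) (μ : Measure (Fin n → ℝ)) : Prop :=
  ∫⁻ x, ENNReal.ofReal (pnorm ρ x ^ ρ) ∂μ < ⊤

/-- The ρ-Wasserstein ball `B_θ(P)`. -/
def WassBallP {n : ℕ} (ρ θ : ℝ) (P : Measure (Fin n → ℝ)) (X : Set (Fin n → ℝ)) :
    Set (Measure (Fin n → ℝ)) :=
  {Q | IsProbabilityMeasure Q ∧ Q X = 1 ∧ HasFiniteMomentP ρ Q ∧ WassP ρ P Q ≤ θ}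

namespace Stmt8Aux

open ProbabilityTheory

variable {n : ℕ} {ρ : ℝ}

lemma sum_abs_rpow_nonneg (x : Fin n → ℝ) : 0 ≤ ∑ i, |x i| ^ ρ :=
  Finset.sum_nonneg fun i _ => Real.rpow_nonneg (abs_nonneg _) _

lemma pnorm_nonneg (x : Fin n → ℝ) : 0 ≤ pnorm ρ x :=
  Real.rpow_nonneg (sum_abs_rpow_nonneg x) _

lemma pnorm_sub_comm (x y : Fin n → ℝ) : pnorm ρ (x - y) = pnorm ρ (y - x) := by
  unfold pnorm
  congr 1
  exact Finset.sum_congr rfl fun i _ => by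
    simp [Pi.sub_apply, abs_sub_comm]

lemma pnorm_neg (x : Fin n → ℝ) : pnorm ρ (-x) = pnorm ρ x := by
  unfold pnorm
  congr 1
  exact Finset.sum_congr rfl fun i _ => by simp

lemma continuous_pnorm (hρ : 0 ≤ ρ) : Continuous (pnorm ρ (n := n)) := by
  unfold pnorm
  have h1 : Continuous fun x : Fin n → ℝ => ∑ i, |x i| ^ ρ :=
    continuous_finset_sum _ fun i _ =>
      ((continuous_abs.comp (continuous_apply i)).rpow_const fun x => Or.inr hρ)
  exact h1.rpow_const fun x => Or.inr (one_div_nonneg.2 hρ)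

lemma pnorm_add_le (hρ : 1 ≤ ρ) (x y : Fin n → ℝ) :
    pnorm ρ (x + y) ≤ pnorm ρ x + pnorm ρ y := by
  have := Real.Lp_add_le (s := Finset.univ) x y hρ
  unfold pnorm
  simpa [Pi.add_apply] using this

lemma pnorm_sub_le (hρ : 1 ≤ ρ) (x y z : Fin n → ℝ) :
    pnorm ρ (x - z) ≤ pnorm ρ (x - y) + pnorm ρ (y - z) := by
  have h : x - z = (x - y) + (y - z) := by abel
  rw [h]
  exact pnorm_add_le hρ _ _

lemma pnorm_sub_le' (hρ : 1 ≤ ρ) (x y : Fin n → ℝ) :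
    pnorm ρ (x - y) ≤ pnorm ρ x + pnorm ρ y := by
  have := pnorm_add_le hρ x (-y)
  rw [pnorm_neg] at this
  simpa [sub_eq_add_neg] using this

lemma pnorm_rpow (hρ0 : 0 < ρ) (x : Fin n → ℝ) :
    pnorm ρ x ^ ρ = ∑ i, |x i| ^ ρ := by
  unfold pnorm
  rw [← Real.rpow_mul (sum_abs_rpow_nonneg x), one_div, inv_mul_cancel₀ hρ0.ne',
    Real.rpow_one]

lemma add_rpow_le (hρ : 0 ≤ ρ) {a b : ℝ} (ha : 0 ≤ a) (hb : 0 ≤ b) :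
    (a + b) ^ ρ ≤ 2 ^ ρ * (a ^ ρ + b ^ ρ) := by
  have h1 : a + b ≤ 2 * max a b := by
    rcases max_cases a b with ⟨h, h'⟩ | ⟨h, h'⟩ <;> rw [h] <;> linarith
  have hmax : (0:ℝ) ≤ max a b := le_max_of_le_left ha
  calc (a + b) ^ ρ ≤ (2 * max a b) ^ ρ :=
        Real.rpow_le_rpow (by linarith) h1 hρ
    _ = 2 ^ ρ * (max a b) ^ ρ := Real.mul_rpow (by norm_num) hmax
    _ ≤ 2 ^ ρ * (a ^ ρ + b ^ ρ) := by
        apply mul_le_mul_of_nonneg_left _ (Real.rpow_nonneg (by norm_num) _)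
        rcases max_cases a b with ⟨h, _⟩ | ⟨h, _⟩ <;> rw [h]
        · exact le_add_of_nonneg_right (Real.rpow_nonneg hb _)
        · exact le_add_of_nonneg_left (Real.rpow_nonneg ha _)

/-- The transport cost of a plan. -/
def cost (ρ : ℝ) {n : ℕ} (γ : Measure ((Fin n → ℝ) × (Fin n → ℝ))) : ℝ≥0∞ :=
  ∫⁻ p, ENNReal.ofReal (pnorm ρ (p.1 - p.2) ^ ρ) ∂γ

lemma measurable_rpc (hρ : 0 ≤ ρ) : Measurable fun t : ℝ => t ^ ρ :=
  (continuous_id.rpow_const fun _ => Or.inr hρ).measurable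

lemma measurable_cost_fn (hρ : 0 ≤ ρ) :
    Measurable fun p : (Fin n → ℝ) × (Fin n → ℝ) =>
      ENNReal.ofReal (pnorm ρ (p.1 - p.2) ^ ρ) :=
  ((measurable_rpc hρ).comp
    ((continuous_pnorm hρ).measurable.comp (measurable_fst.sub measurable_snd))).ennreal_ofReal

/-- ENNReal-valued Wasserstein quantity. -/
def We (ρ : ℝ) {n : ℕ} (μ ν : Measure (Fin n → ℝ)) : ℝ≥0∞ :=
  (⨅ γ ∈ Couplings μ ν, cost ρ γ) ^ (1/ρ)

lemma wassP_eq (ρ : ℝ) (μ ν : Measure (Fin n → ℝ)) :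
    WassP ρ μ ν = (We ρ μ ν).toReal := by
  unfold WassP We cost
  exact ENNReal.toReal_rpow _ _

lemma prod_mem_couplings (μ ν : Measure (Fin n → ℝ)) [IsProbabilityMeasure μ]
    [IsProbabilityMeasure ν] : μ.prod ν ∈ Couplings μ ν :=
  ⟨inferInstance, Measure.fst_prod, Measure.snd_prod⟩

lemma We_le (hρ : 0 ≤ ρ) {μ ν : Measure (Fin n → ℝ)}
    {γ : Measure ((Fin n → ℝ) × (Fin n → ℝ))} (hγ : γ ∈ Couplings μ ν) :
    We ρ μ ν ≤ cost ρ γ ^ (1/ρ) :=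
  ENNReal.rpow_le_rpow (iInf₂_le γ hγ) (one_div_nonneg.2 hρ)

lemma cost_swap (hρ : 0 ≤ ρ) (γ : Measure ((Fin n → ℝ) × (Fin n → ℝ))) :
    cost ρ (γ.map Prod.swap) = cost ρ γ := by
  unfold cost
  rw [lintegral_map (measurable_cost_fn hρ) measurable_swap]
  exact lintegral_congr fun p => by simp [Prod.swap, pnorm_sub_comm]

lemma swap_mem_couplings {μ ν : Measure (Fin n → ℝ)}
    {γ : Measure ((Fin n → ℝ) × (Fin n → ℝ))} (hγ : γ ∈ Couplings μ ν) :
    γ.map Prod.swap ∈ Couplings ν μ := by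
  obtain ⟨h1, h2, h3⟩ := hγ
  haveI := h1
  refine ⟨Measure.isProbabilityMeasure_map measurable_swap.aemeasurable, ?_, ?_⟩
  · rw [Measure.map_map measurable_fst measurable_swap]; exact h3
  · rw [Measure.map_map measurable_snd measurable_swap]; exact h2

lemma We_symm (hρ : 0 ≤ ρ) (μ ν : Measure (Fin n → ℝ)) :
    We ρ μ ν = We ρ ν μ := by
  unfold We
  congr 1
  have key : ∀ μ' ν' : Measure (Fin n → ℝ),
      (⨅ γ ∈ Couplings ν' μ', cost ρ γ) ≤ ⨅ γ ∈ Couplings μ' ν', cost ρ γ := by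
    intro μ' ν'
    refine le_iInf₂ fun γ hγ => ?_
    calc (⨅ γ ∈ Couplings ν' μ', cost ρ γ) ≤ cost ρ (γ.map Prod.swap) :=
          iInf₂_le _ (swap_mem_couplings hγ)
      _ = cost ρ γ := cost_swap hρ γ
  exact le_antisymm (key ν μ) (key μ ν)

end Stmt8Aux

namespace Stmt8Aux

open ProbabilityTheory

variable {n : ℕ} {ρ : ℝ}

lemma rpow_iInf {ι : Sort*} (f : ι → ℝ≥0∞) {y : ℝ} (hy : 0 < y) :
    (⨅ i, f i) ^ y = ⨅ i, f i ^ y :=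
  OrderIso.map_iInf (ENNReal.orderIsoRpow y hy) f

lemma rpow_biInf {ι : Type*} (C : Set ι) (g : ι → ℝ≥0∞) {y : ℝ} (hy : 0 < y) :
    (⨅ x ∈ C, g x) ^ y = ⨅ x ∈ C, (g x) ^ y := by
  rw [rpow_iInf _ hy]
  exact iInf_congr fun x => rpow_iInf _ hy

lemma We_triangle (hρ1 : 1 ≤ ρ) (μ ν ξ : Measure (Fin n → ℝ))
    [IsProbabilityMeasure μ] [IsProbabilityMeasure ν] [IsProbabilityMeasure ξ] :
    We ρ μ ξ ≤ We ρ μ ν + We ρ ν ξ := by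
  have hρ0 : 0 < ρ := lt_of_lt_of_le one_pos hρ1
  have key : ∀ γ1 ∈ Couplings μ ν, ∀ γ2 ∈ Couplings ν ξ,
      We ρ μ ξ ≤ cost ρ γ1 ^ (1/ρ) + cost ρ γ2 ^ (1/ρ) := by
    rintro γ1 ⟨hp1, hf1, hs1⟩ γ2 ⟨hp2, hf2, hs2⟩
    haveI := hp1; haveI := hp2
    set η : Measure ((Fin n → ℝ) × (Fin n → ℝ)) := γ1.map Prod.swap with hηdef
    haveI : IsProbabilityMeasure η := Measure.isProbabilityMeasure_map measurable_swap.aemeasurable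
    have hηfst : η.fst = ν := by
      show (γ1.map Prod.swap).map Prod.fst = ν
      rw [Measure.map_map measurable_fst measurable_swap]; exact hs1
    have hγ2fst : γ2.fst = ν := hf2
    set κ1 := η.condKernel with hκ1
    set κ2 := γ2.condKernel with hκ2
    haveI : IsMarkovKernel κ1 := by rw [hκ1]; infer_instance
    haveI : IsMarkovKernel κ2 := by rw [hκ2]; infer_instance
    have hd1 : ν ⊗ₘ κ1 = η := by rw [← hηfst, hκ1]; exact η.disintegrate η.condKernel
    have hd2 : ν ⊗ₘ κ2 = γ2 := by rw [← hγ2fst, hκ2]; exact γ2.disintegrate γ2.condKernel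
    set T : Measure ((Fin n → ℝ) × ((Fin n → ℝ) × (Fin n → ℝ))) := ν ⊗ₘ (κ1 ×ₖ κ2) with hT
    haveI : IsProbabilityMeasure T := by rw [hT]; infer_instance
    set γ : Measure ((Fin n → ℝ) × (Fin n → ℝ)) := T.map Prod.snd with hγdef
    haveI : IsProbabilityMeasure γ := Measure.isProbabilityMeasure_map measurable_snd.aemeasurable
    -- first marginal
    have hmfst : γ.map Prod.fst = μ := by
      have e1 : γ.map Prod.fst = T.map (fun p => p.2.1) := by
        rw [hγdef, Measure.map_map measurable_fst measurable_snd]; rfl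
      have e2 : μ = η.map Prod.snd := by
        rw [hηdef, Measure.map_map measurable_snd measurable_swap]; exact hf1.symm
      rw [e1, e2, ← hd1]
      ext A hA
      rw [Measure.map_apply (measurable_snd.fst) hA,
        Measure.map_apply measurable_snd hA, hT,
        Measure.compProd_apply (measurable_snd.fst hA),
        Measure.compProd_apply (measurable_snd hA)]
      refine lintegral_congr fun y => ?_
      have hpre1 : (Prod.mk y ⁻¹' ((fun p : (Fin n → ℝ) × ((Fin n → ℝ) × (Fin n → ℝ)) => p.2.1) ⁻¹' A))
          = Prod.fst ⁻¹' A := rfl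
      have hpre2 : (Prod.mk y ⁻¹' (Prod.snd ⁻¹' A) : Set (Fin n → ℝ)) = A := rfl
      rw [hpre1, hpre2, Kernel.prod_apply, ← Set.prod_univ, Measure.prod_prod,
        measure_univ, mul_one]
    -- second marginal
    have hmsnd : γ.map Prod.snd = ξ := by
      have e1 : γ.map Prod.snd = T.map (fun p => p.2.2) := by
        rw [hγdef, Measure.map_map measurable_snd measurable_snd]; rfl
      have e2 : ξ = γ2.map Prod.snd := hs2.symm
      rw [e1, e2, ← hd2]
      ext A hA
      rw [Measure.map_apply (measurable_snd.snd) hA,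
        Measure.map_apply measurable_snd hA, hT,
        Measure.compProd_apply (measurable_snd.snd hA),
        Measure.compProd_apply (measurable_snd hA)]
      refine lintegral_congr fun y => ?_
      have hpre1 : (Prod.mk y ⁻¹' ((fun p : (Fin n → ℝ) × ((Fin n → ℝ) × (Fin n → ℝ)) => p.2.2) ⁻¹' A))
          = Prod.snd ⁻¹' A := rfl
      have hpre2 : (Prod.mk y ⁻¹' (Prod.snd ⁻¹' A) : Set (Fin n → ℝ)) = A := rfl
      rw [hpre1, hpre2, Kernel.prod_apply, ← Set.univ_prod, Measure.prod_prod,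
        measure_univ, one_mul]
    have hγmem : γ ∈ Couplings μ ξ := ⟨inferInstance, hmfst, hmsnd⟩
    -- cost estimate
    set F : (Fin n → ℝ) × ((Fin n → ℝ) × (Fin n → ℝ)) → ℝ≥0∞ :=
      fun t => ENNReal.ofReal (pnorm ρ (t.2.1 - t.1)) with hF
    set G : (Fin n → ℝ) × ((Fin n → ℝ) × (Fin n → ℝ)) → ℝ≥0∞ :=
      fun t => ENNReal.ofReal (pnorm ρ (t.1 - t.2.2)) with hG
    have mF : Measurable F := by
      rw [hF]
      exact ((continuous_pnorm hρ0.le).measurable.comp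
        ((measurable_snd.fst).sub measurable_fst)).ennreal_ofReal
    have mG : Measurable G := by
      rw [hG]
      exact ((continuous_pnorm hρ0.le).measurable.comp
        (measurable_fst.sub measurable_snd.snd)).ennreal_ofReal
    have hcost : cost ρ γ ≤ ∫⁻ t, (F + G) t ^ ρ ∂T := by
      rw [hγdef]
      unfold cost
      rw [lintegral_map (measurable_cost_fn hρ0.le) measurable_snd]
      refine lintegral_mono fun t => ?_
      show ENNReal.ofReal (pnorm ρ (t.2.1 - t.2.2) ^ ρ) ≤ (F t + G t) ^ ρ
      rw [← ENNReal.ofReal_rpow_of_nonneg (pnorm_nonneg _) hρ0.le]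
      refine ENNReal.rpow_le_rpow ?_ hρ0.le
      calc ENNReal.ofReal (pnorm ρ (t.2.1 - t.2.2))
          ≤ ENNReal.ofReal (pnorm ρ (t.2.1 - t.1) + pnorm ρ (t.1 - t.2.2)) :=
            ENNReal.ofReal_le_ofReal (pnorm_sub_le hρ1 _ _ _)
        _ = F t + G t := ENNReal.ofReal_add (pnorm_nonneg _) (pnorm_nonneg _)
    have hFi : ∫⁻ t, F t ^ ρ ∂T = cost ρ γ1 := by
      have mcost1 : Measurable fun p : (Fin n → ℝ) × ((Fin n → ℝ) × (Fin n → ℝ)) =>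
          ENNReal.ofReal (pnorm ρ (p.2.1 - p.1) ^ ρ) :=
        ((measurable_rpc hρ0.le).comp ((continuous_pnorm hρ0.le).measurable.comp
          ((measurable_snd.fst).sub measurable_fst))).ennreal_ofReal
      have mcost2 : Measurable fun p : (Fin n → ℝ) × (Fin n → ℝ) =>
          ENNReal.ofReal (pnorm ρ (p.2 - p.1) ^ ρ) :=
        ((measurable_rpc hρ0.le).comp ((continuous_pnorm hρ0.le).measurable.comp
          (measurable_snd.sub measurable_fst))).ennreal_ofReal
      calc ∫⁻ t, F t ^ ρ ∂T
          = ∫⁻ t, ENNReal.ofReal (pnorm ρ (t.2.1 - t.1) ^ ρ) ∂T :=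
            lintegral_congr fun t => by
              simp only [hF]
              exact ENNReal.ofReal_rpow_of_nonneg (pnorm_nonneg _) hρ0.le
        _ = ∫⁻ y, ∫⁻ p, ENNReal.ofReal (pnorm ρ (p.1 - y) ^ ρ) ∂(κ1 ×ₖ κ2) y ∂ν := by
            rw [hT, Measure.lintegral_compProd mcost1]
        _ = ∫⁻ y, ∫⁻ x, ENNReal.ofReal (pnorm ρ (x - y) ^ ρ) ∂κ1 y ∂ν := by
            refine lintegral_congr fun y => ?_
            rw [Kernel.lintegral_prod _ _ _ (by
              exact ((measurable_rpc hρ0.le).comp ((continuous_pnorm hρ0.le).measurable.comp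
                (measurable_fst.sub measurable_const))).ennreal_ofReal)]
            refine lintegral_congr fun x => ?_
            show ∫⁻ _c, ENNReal.ofReal (pnorm ρ (x - y) ^ ρ) ∂κ2 y
                = ENNReal.ofReal (pnorm ρ (x - y) ^ ρ)
            rw [lintegral_const, measure_univ, mul_one]
        _ = ∫⁻ p, ENNReal.ofReal (pnorm ρ (p.2 - p.1) ^ ρ) ∂(ν ⊗ₘ κ1) :=
            (Measure.lintegral_compProd mcost2).symm
        _ = ∫⁻ p, ENNReal.ofReal (pnorm ρ (p.2 - p.1) ^ ρ) ∂η := by rw [hd1]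
        _ = cost ρ γ1 := by
            rw [hηdef, lintegral_map mcost2 measurable_swap]
            rfl
    have hGi : ∫⁻ t, G t ^ ρ ∂T = cost ρ γ2 := by
      have mcost1 : Measurable fun p : (Fin n → ℝ) × ((Fin n → ℝ) × (Fin n → ℝ)) =>
          ENNReal.ofReal (pnorm ρ (p.1 - p.2.2) ^ ρ) :=
        ((measurable_rpc hρ0.le).comp ((continuous_pnorm hρ0.le).measurable.comp
          (measurable_fst.sub measurable_snd.snd))).ennreal_ofReal
      calc ∫⁻ t, G t ^ ρ ∂T
          = ∫⁻ t, ENNReal.ofReal (pnorm ρ (t.1 - t.2.2) ^ ρ) ∂T :=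
            lintegral_congr fun t => by
              simp only [hG]
              exact ENNReal.ofReal_rpow_of_nonneg (pnorm_nonneg _) hρ0.le
        _ = ∫⁻ y, ∫⁻ p, ENNReal.ofReal (pnorm ρ (y - p.2) ^ ρ) ∂(κ1 ×ₖ κ2) y ∂ν := by
            rw [hT, Measure.lintegral_compProd mcost1]
        _ = ∫⁻ y, ∫⁻ z, ENNReal.ofReal (pnorm ρ (y - z) ^ ρ) ∂κ2 y ∂ν := by
            refine lintegral_congr fun y => ?_
            rw [Kernel.lintegral_prod _ _ _ (by
              exact ((measurable_rpc hρ0.le).comp ((continuous_pnorm hρ0.le).measurable.comp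
                (measurable_const.sub measurable_snd))).ennreal_ofReal)]
            show ∫⁻ _b, ∫⁻ z, ENNReal.ofReal (pnorm ρ (y - z) ^ ρ) ∂κ2 y ∂κ1 y
                = ∫⁻ z, ENNReal.ofReal (pnorm ρ (y - z) ^ ρ) ∂κ2 y
            rw [lintegral_const, measure_univ, mul_one]
        _ = ∫⁻ p, ENNReal.ofReal (pnorm ρ (p.1 - p.2) ^ ρ) ∂(ν ⊗ₘ κ2) :=
            (Measure.lintegral_compProd (measurable_cost_fn hρ0.le)).symm
        _ = cost ρ γ2 := by rw [hd2]; rfl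
    have hMink := ENNReal.lintegral_Lp_add_le (μ := T) mF.aemeasurable mG.aemeasurable hρ1
    calc We ρ μ ξ ≤ cost ρ γ ^ (1/ρ) := We_le hρ0.le hγmem
      _ ≤ (∫⁻ t, (F + G) t ^ ρ ∂T) ^ (1/ρ) :=
          ENNReal.rpow_le_rpow hcost (one_div_nonneg.2 hρ0.le)
      _ ≤ (∫⁻ t, F t ^ ρ ∂T) ^ (1/ρ) + (∫⁻ t, G t ^ ρ ∂T) ^ (1/ρ) := hMink
      _ = cost ρ γ1 ^ (1/ρ) + cost ρ γ2 ^ (1/ρ) := by rw [hFi, hGi]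
  -- now the infimum juggling
  have h1 : We ρ μ ξ ≤ ⨅ γ1 ∈ Couplings μ ν, ⨅ γ2 ∈ Couplings ν ξ,
      (cost ρ γ1 ^ (1/ρ) + cost ρ γ2 ^ (1/ρ)) :=
    le_iInf₂ fun γ1 h1 => le_iInf₂ fun γ2 h2 => key γ1 h1 γ2 h2
  refine h1.trans ?_
  have h2 : ∀ γ1 : Measure ((Fin n → ℝ) × (Fin n → ℝ)),
      (⨅ γ2 ∈ Couplings ν ξ, (cost ρ γ1 ^ (1/ρ) + cost ρ γ2 ^ (1/ρ)))
        = cost ρ γ1 ^ (1/ρ) + We ρ ν ξ := by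
    intro γ1
    rw [show We ρ ν ξ = ⨅ γ2 ∈ Couplings ν ξ, cost ρ γ2 ^ (1/ρ) from
      rpow_biInf _ _ (one_div_pos.2 hρ0)]
    simp_rw [ENNReal.add_iInf]
  calc (⨅ γ1 ∈ Couplings μ ν, ⨅ γ2 ∈ Couplings ν ξ,
        (cost ρ γ1 ^ (1/ρ) + cost ρ γ2 ^ (1/ρ)))
      = ⨅ γ1 ∈ Couplings μ ν, (cost ρ γ1 ^ (1/ρ) + We ρ ν ξ) := by
        exact iInf_congr fun γ1 => iInf_congr fun _ => h2 γ1
    _ = (⨅ γ1 ∈ Couplings μ ν, cost ρ γ1 ^ (1/ρ)) + We ρ ν ξ := by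
        simp_rw [ENNReal.iInf_add]
    _ = We ρ μ ν + We ρ ν ξ := by
        rw [← rpow_biInf _ _ (one_div_pos.2 hρ0)]; rfl
    _ ≤ We ρ μ ν + We ρ ν ξ := le_rfl

end Stmt8Aux

namespace Stmt8Aux

variable {n : ℕ} {ρ : ℝ}

lemma abs_sSup_image_sub_le {M : Type*} {S : Set M} {g h : M → ℝ} {ε : ℝ} (hε : 0 ≤ ε)
    (hb : ∀ x ∈ S, |g x - h x| ≤ ε) :
    |sSup (g '' S) - sSup (h '' S)| ≤ ε := by
  rcases S.eq_empty_or_nonempty with rfl | hS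
  · simpa using hε
  have himp : ∀ g' h' : M → ℝ, (∀ x ∈ S, |g' x - h' x| ≤ ε) → BddAbove (g' '' S) →
      BddAbove (h' '' S) := by
    rintro g' h' hb' ⟨M0, hM0⟩
    refine ⟨M0 + ε, ?_⟩
    rintro y ⟨x, hx, rfl⟩
    have h1 := hb' x hx
    rw [abs_le] at h1
    have h2 : g' x ≤ M0 := hM0 ⟨x, hx, rfl⟩
    linarith [h1.1, h1.2]
  have hkey : ∀ g' h' : M → ℝ, (∀ x ∈ S, |g' x - h' x| ≤ ε) → BddAbove (g' '' S) →
      sSup (h' '' S) ≤ sSup (g' '' S) + ε := by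
    intro g' h' hb' hg'
    refine csSup_le (hS.image h') ?_
    rintro y ⟨x, hx, rfl⟩
    have h1 := hb' x hx
    rw [abs_le] at h1
    have h2 : g' x ≤ sSup (g' '' S) := le_csSup hg' ⟨x, hx, rfl⟩
    linarith [h1.1, h1.2]
  have hsymm : ∀ x ∈ S, |h x - g x| ≤ ε := fun x hx => by
    rw [abs_sub_comm]; exact hb x hx
  by_cases hg : BddAbove (g '' S)
  · have hh : BddAbove (h '' S) := himp g h hb hg
    have e1 := hkey g h hb hg
    have e2 := hkey h g hsymm hh
    rw [abs_le]
    constructor <;> linarith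
  · have hh : ¬ BddAbove (h '' S) := fun hh => hg (himp h g hsymm hh)
    rw [Real.sSup_of_not_bddAbove hg, Real.sSup_of_not_bddAbove hh]
    simpa using hε

lemma measurable_mom (hρ : 0 ≤ ρ) :
    Measurable fun x : Fin n → ℝ => ENNReal.ofReal (pnorm ρ x ^ ρ) :=
  ((measurable_rpc hρ).comp (continuous_pnorm hρ).measurable).ennreal_ofReal

lemma moment_map (hρ1 : 1 ≤ ρ) {m : ℕ} (f : (Fin n → ℝ) → (Fin m → ℝ))
    (hf : Measurable f) {Lf : ℝ} (hLf : 0 < Lf)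
    (hLip : ∀ x y, pnorm ρ (f x - f y) ≤ Lf * pnorm ρ (x - y))
    (Q : Measure (Fin n → ℝ)) [IsProbabilityMeasure Q] (hQm : HasFiniteMomentP ρ Q) :
    HasFiniteMomentP ρ (Q.map f) := by
  have hρ0 : 0 < ρ := lt_of_lt_of_le one_pos hρ1
  unfold HasFiniteMomentP
  rw [lintegral_map (measurable_mom hρ0.le) hf]
  set K := pnorm ρ (f 0) with hK
  have hK0 : 0 ≤ K := pnorm_nonneg _
  have hb : ∀ y, ENNReal.ofReal (pnorm ρ (f y) ^ ρ) ≤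
      ENNReal.ofReal (2 ^ ρ * Lf ^ ρ) * ENNReal.ofReal (pnorm ρ y ^ ρ)
        + ENNReal.ofReal (2 ^ ρ * K ^ ρ) := by
    intro y
    have h1 : pnorm ρ (f y) ≤ Lf * pnorm ρ y + K := by
      have t1 : pnorm ρ (f y) ≤ pnorm ρ (f y - f 0) + pnorm ρ (f 0) := by
        have := pnorm_add_le hρ1 (f y - f 0) (f 0)
        simpa using this
      have t2 : pnorm ρ (f y - f 0) ≤ Lf * pnorm ρ (y - 0) := hLip y 0
      rw [sub_zero] at t2
      linarith
    have h2 : pnorm ρ (f y) ^ ρ ≤ (Lf * pnorm ρ y + K) ^ ρ :=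
      Real.rpow_le_rpow (pnorm_nonneg _) h1 hρ0.le
    have h3 : (Lf * pnorm ρ y + K) ^ ρ ≤ 2 ^ ρ * ((Lf * pnorm ρ y) ^ ρ + K ^ ρ) :=
      add_rpow_le hρ0.le (mul_nonneg hLf.le (pnorm_nonneg _)) hK0
    have h4 : (Lf * pnorm ρ y) ^ ρ = Lf ^ ρ * pnorm ρ y ^ ρ :=
      Real.mul_rpow hLf.le (pnorm_nonneg _)
    have h5 : pnorm ρ (f y) ^ ρ ≤ 2 ^ ρ * Lf ^ ρ * pnorm ρ y ^ ρ + 2 ^ ρ * K ^ ρ := by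
      calc pnorm ρ (f y) ^ ρ ≤ 2 ^ ρ * ((Lf * pnorm ρ y) ^ ρ + K ^ ρ) := h2.trans h3
        _ = 2 ^ ρ * Lf ^ ρ * pnorm ρ y ^ ρ + 2 ^ ρ * K ^ ρ := by rw [h4]; ring
    calc ENNReal.ofReal (pnorm ρ (f y) ^ ρ)
        ≤ ENNReal.ofReal (2 ^ ρ * Lf ^ ρ * pnorm ρ y ^ ρ + 2 ^ ρ * K ^ ρ) :=
          ENNReal.ofReal_le_ofReal h5
      _ = _ := by
          have hz : (0:ℝ) ≤ pnorm ρ y ^ ρ := Real.rpow_nonneg (pnorm_nonneg _) _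
          have h2ρ : (0:ℝ) ≤ 2 ^ ρ := Real.rpow_nonneg (by norm_num) _
          have hLρ : (0:ℝ) ≤ Lf ^ ρ := Real.rpow_nonneg hLf.le _
          have hKρ : (0:ℝ) ≤ K ^ ρ := Real.rpow_nonneg hK0 _
          rw [ENNReal.ofReal_add (mul_nonneg (mul_nonneg h2ρ hLρ) hz) (mul_nonneg h2ρ hKρ),
            ENNReal.ofReal_mul (mul_nonneg h2ρ hLρ)]
  calc ∫⁻ y, ENNReal.ofReal (pnorm ρ (f y) ^ ρ) ∂Q
      ≤ ∫⁻ y, (ENNReal.ofReal (2 ^ ρ * Lf ^ ρ) * ENNReal.ofReal (pnorm ρ y ^ ρ)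
          + ENNReal.ofReal (2 ^ ρ * K ^ ρ)) ∂Q := lintegral_mono hb
    _ = ENNReal.ofReal (2 ^ ρ * Lf ^ ρ) * (∫⁻ y, ENNReal.ofReal (pnorm ρ y ^ ρ) ∂Q)
          + ENNReal.ofReal (2 ^ ρ * K ^ ρ) := by
        rw [lintegral_add_right _ measurable_const,
          lintegral_const_mul _ (measurable_mom hρ0.le), lintegral_const,
          measure_univ, mul_one]
    _ < ⊤ := by
        apply ENNReal.add_lt_top.2
        exact ⟨ENNReal.mul_lt_top ENNReal.ofReal_lt_top hQm, ENNReal.ofReal_lt_top⟩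

lemma cost_prod_lt_top (hρ1 : 1 ≤ ρ) (μ ν : Measure (Fin n → ℝ))
    [IsProbabilityMeasure μ] [IsProbabilityMeasure ν]
    (hμ : HasFiniteMomentP ρ μ) (hν : HasFiniteMomentP ρ ν) :
    cost ρ (μ.prod ν) < ⊤ := by
  have hρ0 : 0 < ρ := lt_of_lt_of_le one_pos hρ1
  have hb : ∀ p : (Fin n → ℝ) × (Fin n → ℝ),
      ENNReal.ofReal (pnorm ρ (p.1 - p.2) ^ ρ) ≤
        ENNReal.ofReal (2 ^ ρ) *
          (ENNReal.ofReal (pnorm ρ p.1 ^ ρ) + ENNReal.ofReal (pnorm ρ p.2 ^ ρ)) := by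
    intro p
    have h1 : pnorm ρ (p.1 - p.2) ^ ρ ≤ 2 ^ ρ * (pnorm ρ p.1 ^ ρ + pnorm ρ p.2 ^ ρ) :=
      (Real.rpow_le_rpow (pnorm_nonneg _) (pnorm_sub_le' hρ1 _ _) hρ0.le).trans
        (add_rpow_le hρ0.le (pnorm_nonneg _) (pnorm_nonneg _))
    calc ENNReal.ofReal (pnorm ρ (p.1 - p.2) ^ ρ)
        ≤ ENNReal.ofReal (2 ^ ρ * (pnorm ρ p.1 ^ ρ + pnorm ρ p.2 ^ ρ)) :=
          ENNReal.ofReal_le_ofReal h1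
      _ = _ := by
          have hz1 : (0:ℝ) ≤ pnorm ρ p.1 ^ ρ := Real.rpow_nonneg (pnorm_nonneg _) _
          have hz2 : (0:ℝ) ≤ pnorm ρ p.2 ^ ρ := Real.rpow_nonneg (pnorm_nonneg _) _
          have h2ρ : (0:ℝ) ≤ 2 ^ ρ := Real.rpow_nonneg (by norm_num) _
          rw [ENNReal.ofReal_mul h2ρ, ENNReal.ofReal_add hz1 hz2]
  have e1 : ∫⁻ p : (Fin n → ℝ) × (Fin n → ℝ),
      ENNReal.ofReal (pnorm ρ p.1 ^ ρ) ∂(μ.prod ν)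
        = ∫⁻ x, ENNReal.ofReal (pnorm ρ x ^ ρ) ∂μ := by
    conv_rhs => rw [← Measure.fst_prod (μ := μ) (ν := ν)]
    rw [Measure.fst, lintegral_map (measurable_mom hρ0.le) measurable_fst]
  have e2 : ∫⁻ p : (Fin n → ℝ) × (Fin n → ℝ),
      ENNReal.ofReal (pnorm ρ p.2 ^ ρ) ∂(μ.prod ν)
        = ∫⁻ x, ENNReal.ofReal (pnorm ρ x ^ ρ) ∂ν := by
    conv_rhs => rw [← Measure.snd_prod (μ := μ) (ν := ν)]
    rw [Measure.snd, lintegral_map (measurable_mom hρ0.le) measurable_snd]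
  calc cost ρ (μ.prod ν)
      ≤ ∫⁻ p, ENNReal.ofReal (2 ^ ρ) *
          (ENNReal.ofReal (pnorm ρ p.1 ^ ρ) + ENNReal.ofReal (pnorm ρ p.2 ^ ρ)) ∂(μ.prod ν) :=
        lintegral_mono hb
    _ = ENNReal.ofReal (2 ^ ρ) *
          ((∫⁻ x, ENNReal.ofReal (pnorm ρ x ^ ρ) ∂μ)
            + ∫⁻ x, ENNReal.ofReal (pnorm ρ x ^ ρ) ∂ν) := by
        have hfst : Measurable fun p : (Fin n → ℝ) × (Fin n → ℝ) =>
            ENNReal.ofReal (pnorm ρ p.1 ^ ρ) := (measurable_mom hρ0.le).comp measurable_fst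
        have hsnd : Measurable fun p : (Fin n → ℝ) × (Fin n → ℝ) =>
            ENNReal.ofReal (pnorm ρ p.2 ^ ρ) := (measurable_mom hρ0.le).comp measurable_snd
        rw [lintegral_const_mul (f := fun p : (Fin n → ℝ) × (Fin n → ℝ) =>
            ENNReal.ofReal (pnorm ρ p.1 ^ ρ) + ENNReal.ofReal (pnorm ρ p.2 ^ ρ)) _
            (by exact hfst.add hsnd),
          lintegral_add_left hfst, e1, e2]
    _ < ⊤ := ENNReal.mul_lt_top ENNReal.ofReal_lt_top (ENNReal.add_lt_top.2 ⟨hμ, hν⟩)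

lemma We_lt_top (hρ1 : 1 ≤ ρ) (μ ν : Measure (Fin n → ℝ))
    [IsProbabilityMeasure μ] [IsProbabilityMeasure ν]
    (hμ : HasFiniteMomentP ρ μ) (hν : HasFiniteMomentP ρ ν) :
    We ρ μ ν < ⊤ := by
  have hρ0 : 0 < ρ := lt_of_lt_of_le one_pos hρ1
  refine lt_of_le_of_lt (We_le hρ0.le (prod_mem_couplings μ ν)) ?_
  exact ENNReal.rpow_lt_top_of_nonneg (one_div_nonneg.2 hρ0.le)
    (cost_prod_lt_top hρ1 μ ν hμ hν).ne

end Stmt8Aux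

open Stmt8Aux

/-- Theorem: convergence rate. Let `f` be `L_f`-Lipschitz w.r.t. the
`L_ρ`-norm, `X̄ ⊆ X` a cube of side `s` with
`∫_{X \ X̄} ‖x - c̄‖^ρ dP ≤ ε^ρ/(2 L_f^ρ)`, let `R` be a uniform partition of `X̄` into
`N ≥ (2^{1/ρ} L_f d^{1/ρ} s / ε)^d` hypercubic regions of side `s / N^{1/d}` with centers
`C`, and set `R* = R ∪ {X \ X̄}`, `C* = C ∪ {c̄}`. Then
`|sup_{Q ∈ B_θ(P)} W_ρ(f#Q, f#Δ_{R*,C*}#P) − sup_{Q ∈ B_θ(P)} W_ρ(f#Q, f#P)| ≤ ε`. -/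
theorem stmt8 {d q N : ℕ} (ρ : ℝ) (hρ : 1 ≤ ρ) (θ : ℝ) (hθ : 0 ≤ θ)
    (ε : ℝ) (hε : 0 < ε) (Lf : ℝ) (hLf : 0 < Lf)
    (X : Set (Fin d → ℝ)) (hXm : MeasurableSet X) (Y : Set (Fin q → ℝ))
    (P : Measure (Fin d → ℝ)) (hP : IsProbabilityMeasure P) (hPX : P X = 1)
    (hPm : HasFiniteMomentP ρ P)
    (f : (Fin d → ℝ) → (Fin q → ℝ)) (hf : Measurable f) (hfXY : Set.MapsTo f X Y)
    (hLip : ∀ x y, pnorm ρ (f x - f y) ≤ Lf * pnorm ρ (x - y))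
    -- `X̄` is a cube of side length `s = ‖X̄‖_∞` contained in `X`
    (Xbar : Set (Fin d → ℝ)) (b : Fin d → ℝ) (s : ℝ) (hs : 0 ≤ s)
    (hXbar : Xbar = {x | ∀ i, b i ≤ x i ∧ x i ≤ b i + s})
    (hXbarX : Xbar ⊆ X)
    -- the tail condition around `c̄ ∈ X`
    (cbar : Fin d → ℝ) (hcbar : cbar ∈ X)
    (htail : ∫ x in X \ Xbar, pnorm ρ (x - cbar) ^ ρ ∂P ≤ ε ^ ρ / (2 * Lf ^ ρ))
    -- `N ≥ (2^{1/ρ} L_f d^{1/ρ} ‖X̄‖_∞ / ε)^d`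
    (hN : (2 ^ (1/ρ) * Lf * (d : ℝ) ^ (1/ρ) * s / ε) ^ (d : ℝ) ≤ (N : ℝ))
    -- `R` is a uniform partition of `X̄` into `N` hypercubic regions of side
    -- `s / N^{1/d}`, and `C` consists of the centers of those hypercubes
    (R : Fin N → Set (Fin d → ℝ)) (hR : IsMeasPartition R Xbar)
    (c : Fin N → (Fin d → ℝ))
    (hcube : ∀ k, ∃ a : Fin d → ℝ,
      R k ⊆ {x | ∀ i, a i ≤ x i ∧ x i ≤ a i + s / (N : ℝ) ^ (1/(d : ℝ))} ∧
      ∀ i, c k i = a i + (s / (N : ℝ) ^ (1/(d : ℝ))) / 2) :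
    |sSup ((fun Q => WassP ρ (Q.map f)
          ((P.map (quantMap (Fin.snoc R (X \ Xbar)) (Fin.snoc c cbar))).map f)) ''
        WassBallP ρ θ P X) -
      sSup ((fun Q => WassP ρ (Q.map f) (P.map f)) '' WassBallP ρ θ P X)| ≤ ε := by
  have hρ0 : 0 < ρ := lt_of_lt_of_le one_pos hρ
  obtain ⟨hRm, hRu, hRd⟩ := hR
  -- measurability of Xbar
  have hXbarM : MeasurableSet Xbar := by
    rw [hXbar]
    have he : {x : Fin d → ℝ | ∀ i, b i ≤ x i ∧ x i ≤ b i + s} =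
        ⋂ i, ({x : Fin d → ℝ | b i ≤ x i} ∩ {x | x i ≤ b i + s}) := by
      ext x
      simp only [Set.mem_setOf_eq, Set.mem_iInter, Set.mem_inter_iff]
    rw [he]
    exact MeasurableSet.iInter fun i =>
      ((measurableSet_le measurable_const (measurable_pi_apply i)).inter
       (measurableSet_le (measurable_pi_apply i) measurable_const))
  set Rstar : Fin (N+1) → Set (Fin d → ℝ) := Fin.snoc R (X \ Xbar) with hRstar
  set cstar : Fin (N+1) → (Fin d → ℝ) := Fin.snoc c cbar with hcstar
  set Δ := quantMap Rstar cstar with hΔdef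
  have hsnocM : ∀ j : Fin (N+1), MeasurableSet (Rstar j) := by
    intro j
    refine Fin.lastCases ?_ ?_ j
    · rw [hRstar, Fin.snoc_last]; exact hXm.diff hXbarM
    · intro i; rw [hRstar, Fin.snoc_castSucc]; exact hRm i
  have hΔm : Measurable Δ := by
    rw [hΔdef]; unfold quantMap
    exact Finset.measurable_sum _ fun j _ => (measurable_const.indicator (hsnocM j))
  -- values of the quantization map
  have hΔXbar : ∀ x ∈ Xbar, ∃ k, x ∈ R k ∧ Δ x = c k := by
    intro x hx
    have hx' : x ∈ ⋃ i, R i := hRu ▸ hx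
    obtain ⟨k, hk⟩ := Set.mem_iUnion.1 hx'
    refine ⟨k, hk, ?_⟩
    rw [hΔdef]; unfold quantMap
    rw [Fin.sum_univ_castSucc]
    simp only [hRstar, hcstar, Fin.snoc_last, Fin.snoc_castSucc]
    rw [Set.indicator_of_notMem (fun hmem => hmem.2 hx), add_zero,
      Finset.sum_eq_single k ?_ ?_]
    · exact Set.indicator_of_mem hk _
    · intro i _ hik
      refine Set.indicator_of_notMem (fun hmem => ?_) _
      exact Set.eq_empty_iff_forall_notMem.1 (hRd i k hik) x ⟨hmem, hk⟩
    · intro hku; exact absurd (Finset.mem_univ k) hku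
  have hΔtail : ∀ x ∈ X \ Xbar, Δ x = cbar := by
    intro x hx
    rw [hΔdef]; unfold quantMap
    rw [Fin.sum_univ_castSucc]
    simp only [hRstar, hcstar, Fin.snoc_last, Fin.snoc_castSucc]
    have hzero : ∀ i : Fin N, (R i).indicator (fun _ => c i) x = 0 := by
      intro i
      refine Set.indicator_of_notMem (fun hmem => hx.2 ?_) _
      rw [← hRu]; exact Set.mem_iUnion.2 ⟨i, hmem⟩
    rw [Set.indicator_of_mem hx, Finset.sum_congr rfl fun i _ => hzero i,
      Finset.sum_const, smul_zero, zero_add]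
  -- probability instances
  haveI := hP
  haveI : IsProbabilityMeasure (P.map Δ) := Measure.isProbabilityMeasure_map hΔm.aemeasurable
  haveI : IsProbabilityMeasure (P.map f) := Measure.isProbabilityMeasure_map hf.aemeasurable
  haveI : IsProbabilityMeasure ((P.map Δ).map f) := Measure.isProbabilityMeasure_map hf.aemeasurable
  -- the coupling between f#P and f#Δ#P
  set g0 : (Fin d → ℝ) → (Fin q → ℝ) × (Fin q → ℝ) := fun x => (f x, f (Δ x)) with hg0def
  have hg0 : Measurable g0 := hf.prodMk (hf.comp hΔm)
  set γ0 := P.map g0 with hγ0def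
  have hγ0 : γ0 ∈ Couplings (P.map f) ((P.map Δ).map f) := by
    refine ⟨Measure.isProbabilityMeasure_map hg0.aemeasurable, ?_, ?_⟩
    · rw [hγ0def, Measure.map_map measurable_fst hg0]; rfl
    · rw [hγ0def, Measure.map_map measurable_snd hg0, Measure.map_map hf hΔm]; rfl
  -- side length of the small cubes
  set hside : ℝ := s / (N : ℝ) ^ (1/(d : ℝ)) with hsidedef
  have hside0 : 0 ≤ hside :=
    div_nonneg hs (Real.rpow_nonneg (Nat.cast_nonneg N) _)
  -- the key real inequality coming from the choice of N
  have hLρ : (0:ℝ) < Lf ^ ρ := Real.rpow_pos_of_pos hLf ρ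
  have hkeyreal : Lf ^ ρ * ((d : ℝ) * (hside/2) ^ ρ) ≤ ε ^ ρ / 2 := by
    rcases Nat.eq_zero_or_pos d with hd0 | hdpos
    · have : ((d : ℝ)) = 0 := by rw [hd0]; norm_num
      rw [this, zero_mul, mul_zero]
      positivity
    rcases eq_or_lt_of_le hs with hs0 | hspos
    · have hz : hside = 0 := by rw [hsidedef, ← hs0, zero_div]
      rw [hz, zero_div, Real.zero_rpow hρ0.ne', mul_zero, mul_zero]
      positivity
    have hdR : (0:ℝ) < (d : ℝ) := Nat.cast_pos.2 hdpos
    set D : ℝ := 2 ^ (1/ρ) * Lf * (d : ℝ) ^ (1/ρ) with hDdef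
    have hD : 0 < D := by
      rw [hDdef]
      have := Real.rpow_pos_of_pos (show (0:ℝ) < 2 by norm_num) (1/ρ)
      have := Real.rpow_pos_of_pos hdR (1/ρ)
      positivity
    set B : ℝ := D * s / ε with hBdef
    have hB : 0 < B := by rw [hBdef]; positivity
    have hNB : B ≤ (N : ℝ) ^ (1/(d : ℝ)) := by
      have h1 : (B ^ ((d : ℝ))) ^ (1/(d : ℝ)) ≤ (N : ℝ) ^ (1/(d : ℝ)) :=
        Real.rpow_le_rpow (Real.rpow_nonneg hB.le _) hN (one_div_nonneg.2 hdR.le)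
      rwa [← Real.rpow_mul hB.le, mul_one_div_cancel hdR.ne', Real.rpow_one] at h1
    have hsB : hside ≤ ε / D := by
      have h1 : hside ≤ s / B := by
        rw [hsidedef]
        exact div_le_div_of_nonneg_left hs hB hNB
      have h2 : s / B = ε / D := by
        rw [hBdef]
        field_simp
      rw [← h2]; exact h1
    have hhalf : hside / 2 ≤ ε / (2 * D) := by
      have h3 : hside / 2 ≤ ε / D / 2 := by linarith
      calc hside / 2 ≤ ε / D / 2 := h3
        _ = ε / (2 * D) := by rw [div_div, mul_comm]
    have hcanc : ∀ x : ℝ, 0 ≤ x → (x ^ (1/ρ)) ^ ρ = x := by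
      intro x hx
      rw [← Real.rpow_mul hx, one_div_mul_cancel hρ0.ne', Real.rpow_one]
    have hDρ : D ^ ρ = 2 * Lf ^ ρ * (d : ℝ) := by
      rw [hDdef, Real.mul_rpow (by positivity) (Real.rpow_nonneg hdR.le _),
        Real.mul_rpow (Real.rpow_nonneg (by norm_num) _) hLf.le,
        hcanc 2 (by norm_num), hcanc _ hdR.le]
    have h2D : (2 * D) ^ ρ = 2 ^ ρ * (2 * Lf ^ ρ * (d : ℝ)) := by
      rw [Real.mul_rpow (by norm_num) hD.le, hDρ]
    have hch : (hside/2) ^ ρ ≤ ε ^ ρ / (2 ^ ρ * (2 * Lf ^ ρ * (d : ℝ))) := by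
      calc (hside/2) ^ ρ ≤ (ε / (2 * D)) ^ ρ :=
            Real.rpow_le_rpow (by positivity) hhalf hρ0.le
        _ = ε ^ ρ / (2 * D) ^ ρ := Real.div_rpow hε.le (by positivity : (0:ℝ) ≤ 2 * D) ρ
        _ = ε ^ ρ / (2 ^ ρ * (2 * Lf ^ ρ * (d : ℝ))) := by rw [h2D]
    have h2ρ1 : (1:ℝ) ≤ 2 ^ ρ := by
      calc (1:ℝ) = 2 ^ (0:ℝ) := by rw [Real.rpow_zero]
        _ ≤ 2 ^ ρ := Real.rpow_le_rpow_of_exponent_le (by norm_num) hρ0.le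
    calc Lf ^ ρ * ((d : ℝ) * (hside/2) ^ ρ)
        ≤ Lf ^ ρ * ((d : ℝ) * (ε ^ ρ / (2 ^ ρ * (2 * Lf ^ ρ * (d : ℝ))))) := by
          apply mul_le_mul_of_nonneg_left _ hLρ.le
          exact mul_le_mul_of_nonneg_left hch hdR.le
      _ = ε ^ ρ / (2 ^ ρ * 2) := by
          field_simp
      _ ≤ ε ^ ρ / 2 := by
          apply div_le_div_of_nonneg_left (by positivity) (by norm_num)
          nlinarith [h2ρ1]
  -- finiteness of the tail integrand globally
  have hshiftm : Measurable fun x : Fin d → ℝ => x - cbar :=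
    measurable_id.sub measurable_const
  have htail_fin : ∫⁻ x, ENNReal.ofReal (pnorm ρ (x - cbar) ^ ρ) ∂P < ⊤ := by
    have hLip' : ∀ x y : Fin d → ℝ,
        pnorm ρ ((x - cbar) - (y - cbar)) ≤ 1 * pnorm ρ (x - y) := by
      intro x y
      have he : (x - cbar) - (y - cbar) = x - y := by abel
      rw [he, one_mul]
    have hm := moment_map hρ (fun x => x - cbar) hshiftm one_pos hLip' P hPm
    unfold HasFiniteMomentP at hm
    rwa [lintegral_map (measurable_mom hρ0.le) hshiftm] at hm
  have hint_tail : IntegrableOn (fun x => pnorm ρ (x - cbar) ^ ρ) (X \ Xbar) P := by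
    have hmr : Measurable fun x : Fin d → ℝ => pnorm ρ (x - cbar) ^ ρ :=
      (measurable_rpc hρ0.le).comp ((continuous_pnorm hρ0.le).measurable.comp hshiftm)
    refine ⟨hmr.aestronglyMeasurable, ?_⟩
    rw [hasFiniteIntegral_iff_ofReal (Filter.Eventually.of_forall fun x =>
      Real.rpow_nonneg (pnorm_nonneg _) _)]
    exact lt_of_le_of_lt (setLIntegral_le_lintegral _ _) htail_fin
  have htail_e : ∫⁻ x in X \ Xbar, ENNReal.ofReal (pnorm ρ (x - cbar) ^ ρ) ∂P
      ≤ ENNReal.ofReal (ε ^ ρ / (2 * Lf ^ ρ)) := by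
    rw [← ofReal_integral_eq_lintegral_ofReal hint_tail
      (Filter.Eventually.of_forall fun x => Real.rpow_nonneg (pnorm_nonneg _) _)]
    exact ENNReal.ofReal_le_ofReal htail
  -- the cost of the quantization coupling
  have hcost0 : cost ρ γ0 ≤ ENNReal.ofReal (ε ^ ρ) := by
    rw [hγ0def]
    unfold cost
    rw [lintegral_map (measurable_cost_fn hρ0.le) hg0]
    have hJm : Measurable fun x => ENNReal.ofReal (pnorm ρ (x - Δ x) ^ ρ) :=
      ((measurable_rpc hρ0.le).comp ((continuous_pnorm hρ0.le).measurable.comp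
        (measurable_id.sub hΔm))).ennreal_ofReal
    have hpt : ∀ x, ENNReal.ofReal (pnorm ρ ((g0 x).1 - (g0 x).2) ^ ρ)
        ≤ ENNReal.ofReal (Lf ^ ρ) * ENNReal.ofReal (pnorm ρ (x - Δ x) ^ ρ) := by
      intro x
      have h1 : pnorm ρ (f x - f (Δ x)) ≤ Lf * pnorm ρ (x - Δ x) := hLip x (Δ x)
      have h2 : pnorm ρ (f x - f (Δ x)) ^ ρ ≤ Lf ^ ρ * pnorm ρ (x - Δ x) ^ ρ := by
        calc pnorm ρ (f x - f (Δ x)) ^ ρ ≤ (Lf * pnorm ρ (x - Δ x)) ^ ρ :=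
              Real.rpow_le_rpow (pnorm_nonneg _) h1 hρ0.le
          _ = Lf ^ ρ * pnorm ρ (x - Δ x) ^ ρ := Real.mul_rpow hLf.le (pnorm_nonneg _)
      calc ENNReal.ofReal (pnorm ρ ((g0 x).1 - (g0 x).2) ^ ρ)
          ≤ ENNReal.ofReal (Lf ^ ρ * pnorm ρ (x - Δ x) ^ ρ) := ENNReal.ofReal_le_ofReal h2
        _ = _ := ENNReal.ofReal_mul (Real.rpow_nonneg hLf.le _)
    have step1 : ∫⁻ x, ENNReal.ofReal (pnorm ρ ((g0 x).1 - (g0 x).2) ^ ρ) ∂P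
        ≤ ENNReal.ofReal (Lf ^ ρ) * ∫⁻ x, ENNReal.ofReal (pnorm ρ (x - Δ x) ^ ρ) ∂P := by
      calc ∫⁻ x, ENNReal.ofReal (pnorm ρ ((g0 x).1 - (g0 x).2) ^ ρ) ∂P
          ≤ ∫⁻ x, ENNReal.ofReal (Lf ^ ρ) * ENNReal.ofReal (pnorm ρ (x - Δ x) ^ ρ) ∂P :=
            lintegral_mono hpt
        _ = _ := lintegral_const_mul _ hJm
    refine step1.trans ?_
    -- split the integral
    have hPXc : P Xᶜ = 0 := by
      have hcpl := measure_compl hXm (measure_ne_top P X)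
      rw [hPX, measure_univ] at hcpl
      simpa using hcpl
    have hJsplit : ∫⁻ x, ENNReal.ofReal (pnorm ρ (x - Δ x) ^ ρ) ∂P
        = ∫⁻ x in Xbar, ENNReal.ofReal (pnorm ρ (x - Δ x) ^ ρ) ∂P
          + ∫⁻ x in X \ Xbar, ENNReal.ofReal (pnorm ρ (x - Δ x) ^ ρ) ∂P := by
      have e0 : ∫⁻ x, ENNReal.ofReal (pnorm ρ (x - Δ x) ^ ρ) ∂P
          = ∫⁻ x in X, ENNReal.ofReal (pnorm ρ (x - Δ x) ^ ρ) ∂P := by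
        rw [← lintegral_add_compl _ hXm (μ := P),
          setLIntegral_measure_zero _ _ hPXc, add_zero]
      have e1 : ∫⁻ x in X, ENNReal.ofReal (pnorm ρ (x - Δ x) ^ ρ) ∂P
          = ∫⁻ x in Xbar ∪ (X \ Xbar), ENNReal.ofReal (pnorm ρ (x - Δ x) ^ ρ) ∂P := by
        rw [Set.union_diff_cancel hXbarX]
      rw [e0, e1, lintegral_union (hXm.diff hXbarM) Set.disjoint_sdiff_right]
    rw [hJsplit]
    have hbar : ∫⁻ x in Xbar, ENNReal.ofReal (pnorm ρ (x - Δ x) ^ ρ) ∂P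
        ≤ ENNReal.ofReal ((d:ℝ) * (hside/2) ^ ρ) := by
      have hpt2 : ∀ x ∈ Xbar, ENNReal.ofReal (pnorm ρ (x - Δ x) ^ ρ)
          ≤ ENNReal.ofReal ((d:ℝ) * (hside/2) ^ ρ) := by
        intro x hx
        obtain ⟨k, hk, hΔx⟩ := hΔXbar x hx
        obtain ⟨a, hsub, hc⟩ := hcube k
        apply ENNReal.ofReal_le_ofReal
        rw [hΔx, pnorm_rpow hρ0]
        have hcoord : ∀ i, |(x - c k) i| ^ ρ ≤ (hside/2) ^ ρ := by
          intro i
          have h1 := (hsub hk) i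
          have h2 := hc i
          have habs : |(x - c k) i| ≤ hside / 2 := by
            rw [Pi.sub_apply, h2, abs_le]
            constructor
            · linarith [h1.1]
            · linarith [h1.2]
          exact Real.rpow_le_rpow (abs_nonneg _) habs hρ0.le
        calc ∑ i, |(x - c k) i| ^ ρ ≤ ∑ _i : Fin d, (hside/2) ^ ρ :=
              Finset.sum_le_sum fun i _ => hcoord i
          _ = (d:ℝ) * (hside/2) ^ ρ := by
              rw [Finset.sum_const, Finset.card_univ, Fintype.card_fin, nsmul_eq_mul]
      calc ∫⁻ x in Xbar, ENNReal.ofReal (pnorm ρ (x - Δ x) ^ ρ) ∂P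
          ≤ ∫⁻ _x in Xbar, ENNReal.ofReal ((d:ℝ) * (hside/2) ^ ρ) ∂P :=
            setLIntegral_mono measurable_const hpt2
        _ = ENNReal.ofReal ((d:ℝ) * (hside/2) ^ ρ) * P Xbar := setLIntegral_const _ _
        _ ≤ ENNReal.ofReal ((d:ℝ) * (hside/2) ^ ρ) * 1 :=
            mul_le_mul_right prob_le_one _
        _ = _ := mul_one _
    have htailpiece : ∫⁻ x in X \ Xbar, ENNReal.ofReal (pnorm ρ (x - Δ x) ^ ρ) ∂P
        ≤ ENNReal.ofReal (ε ^ ρ / (2 * Lf ^ ρ)) := by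
      have he : ∫⁻ x in X \ Xbar, ENNReal.ofReal (pnorm ρ (x - Δ x) ^ ρ) ∂P
          = ∫⁻ x in X \ Xbar, ENNReal.ofReal (pnorm ρ (x - cbar) ^ ρ) ∂P := by
        apply setLIntegral_congr_fun (hXm.diff hXbarM)
        exact fun x hx => by rw [hΔtail x hx]
      rw [he]; exact htail_e
    have hd2 : (0:ℝ) ≤ (d:ℝ) * (hside/2) ^ ρ := by positivity
    have htb : (0:ℝ) ≤ ε ^ ρ / (2 * Lf ^ ρ) := by positivity
    calc ENNReal.ofReal (Lf ^ ρ) *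
          (∫⁻ x in Xbar, ENNReal.ofReal (pnorm ρ (x - Δ x) ^ ρ) ∂P
            + ∫⁻ x in X \ Xbar, ENNReal.ofReal (pnorm ρ (x - Δ x) ^ ρ) ∂P)
        ≤ ENNReal.ofReal (Lf ^ ρ) * (ENNReal.ofReal ((d:ℝ) * (hside/2) ^ ρ)
            + ENNReal.ofReal (ε ^ ρ / (2 * Lf ^ ρ))) :=
          mul_le_mul_right (add_le_add hbar htailpiece) _
      _ = ENNReal.ofReal (Lf ^ ρ * ((d:ℝ) * (hside/2) ^ ρ + ε ^ ρ / (2 * Lf ^ ρ))) := by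
          rw [← ENNReal.ofReal_add hd2 htb, ← ENNReal.ofReal_mul hLρ.le]
      _ ≤ ENNReal.ofReal (ε ^ ρ) := by
          apply ENNReal.ofReal_le_ofReal
          have hhalf2 : Lf ^ ρ * (ε ^ ρ / (2 * Lf ^ ρ)) = ε ^ ρ / 2 := by
            field_simp
          rw [mul_add, hhalf2]
          linarith [hkeyreal]
  -- the ENNReal Wasserstein bound for the quantization error
  have hWec : We ρ (P.map f) ((P.map Δ).map f) ≤ ENNReal.ofReal ε := by
    refine (We_le hρ0.le hγ0).trans ?_
    calc cost ρ γ0 ^ (1/ρ) ≤ ENNReal.ofReal (ε ^ ρ) ^ (1/ρ) :=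
          ENNReal.rpow_le_rpow hcost0 (one_div_nonneg.2 hρ0.le)
      _ = ENNReal.ofReal ε := by
          rw [← ENNReal.ofReal_rpow_of_nonneg hε.le hρ0.le, ← ENNReal.rpow_mul,
            mul_one_div_cancel hρ0.ne', ENNReal.rpow_one]
  have hPfmom : HasFiniteMomentP ρ (P.map f) := moment_map hρ f hf hLf hLip P hPm
  -- conclude via the sup comparison lemma
  apply abs_sSup_image_sub_le hε.le
  intro Q hQ
  obtain ⟨hQp, _, hQm, _⟩ := hQ
  haveI := hQp
  haveI : IsProbabilityMeasure (Q.map f) := Measure.isProbabilityMeasure_map hf.aemeasurable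
  have hQfmom : HasFiniteMomentP ρ (Q.map f) := moment_map hρ f hf hLf hLip Q hQm
  have tri1 : We ρ (Q.map f) ((P.map Δ).map f)
      ≤ We ρ (Q.map f) (P.map f) + We ρ (P.map f) ((P.map Δ).map f) :=
    We_triangle hρ _ _ _
  have tri2 : We ρ (Q.map f) (P.map f)
      ≤ We ρ (Q.map f) ((P.map Δ).map f) + We ρ (P.map f) ((P.map Δ).map f) := by
    have h := We_triangle hρ (Q.map f) ((P.map Δ).map f) (P.map f)
    rwa [We_symm hρ0.le ((P.map Δ).map f) (P.map f)] at h
  have hCt : We ρ (P.map f) ((P.map Δ).map f) ≠ ⊤ :=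
    (hWec.trans_lt ENNReal.ofReal_lt_top).ne
  have hBt : We ρ (Q.map f) (P.map f) ≠ ⊤ :=
    (We_lt_top hρ _ _ hQfmom hPfmom).ne
  have hAt : We ρ (Q.map f) ((P.map Δ).map f) ≠ ⊤ := by
    refine ne_top_of_le_ne_top ?_ tri1
    exact ENNReal.add_ne_top.2 ⟨hBt, hCt⟩
  have hCr : (We ρ (P.map f) ((P.map Δ).map f)).toReal ≤ ε :=
    ENNReal.toReal_le_of_le_ofReal hε.le hWec
  rw [wassP_eq, wassP_eq, abs_le]
  have h1 : (We ρ (Q.map f) (P.map f)).toReal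
      ≤ (We ρ (Q.map f) ((P.map Δ).map f)).toReal
        + (We ρ (P.map f) ((P.map Δ).map f)).toReal := by
    calc (We ρ (Q.map f) (P.map f)).toReal
        ≤ (We ρ (Q.map f) ((P.map Δ).map f)
            + We ρ (P.map f) ((P.map Δ).map f)).toReal :=
          ENNReal.toReal_mono (ENNReal.add_ne_top.2 ⟨hAt, hCt⟩) tri2
      _ = _ := ENNReal.toReal_add hAt hCt
  have h2 : (We ρ (Q.map f) ((P.map Δ).map f)).toReal
      ≤ (We ρ (Q.map f) (P.map f)).toReal
        + (We ρ (P.map f) ((P.map Δ).map f)).toReal := by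
    calc (We ρ (Q.map f) ((P.map Δ).map f)).toReal
        ≤ (We ρ (Q.map f) (P.map f)
            + We ρ (P.map f) ((P.map Δ).map f)).toReal :=
          ENNReal.toReal_mono (ENNReal.add_ne_top.2 ⟨hBt, hCt⟩) tri1
      _ = _ := ENNReal.toReal_add hBt hCt
  constructor <;> linarith
end
end
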